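/- arXiv:1607.06569 — 7 statements merged into one kernel-verified Lean document; each statement's English description precedes it below -/
import Mathlib

section
/- Let H be a real Hilbert space, f : H → ℝ ∪ {+∞} a proper lower semicontinuous function, x̄ ∈ dom f and p ∈ ∂_p f(x̄). If there exist δ, λ > 0 such that f − (1/(2λ))‖·‖² is concave on B(x̄, δ), then for all u, v ∈ B(x̄, δ) and all μ ∈ [0, 1] one has (in extended-real arithmetic) f''₋(x̄, p, μu + (1−μ)v) − (1/λ)‖μu + (1−μ)v‖² ≥ μ(f''₋(x̄, p, u) − (1/λ)‖u‖²) + (1−μ)(f''₋(x̄, p, v) − (1/λ)‖v‖²); that is, f''₋(x̄, p, ·) − (1/λ)‖·‖² is concave on B(x̄, δ). -/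
open Filter Topology Set Pointwise

noncomputable section

variable {H : Type*} [NormedAddCommGroup H] [InnerProductSpace ℝ H] [CompleteSpace H]

/-- The proximal subdifferential of `f` at `x`. -/
def proxSubdiff (f : H → EReal) (x : H) : Set H :=
  {ζ | ∃ σ > (0:ℝ), ∃ δ > (0:ℝ), ∀ y ∈ Metric.ball x δ,
    f x + (((inner ℝ ζ (y - x) : ℝ) - σ / 2 * ‖y - x‖ ^ 2 : ℝ) : EReal) ≤ f y}

/-- The second-order difference quotient `Δ₂f(x₀,p,t,u)`. -/
def Delta2 (f : H → EReal) (x₀ p : H) (t : ℝ) (u : H) : EReal :=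
  ((2 / t ^ 2 : ℝ) : EReal) * (f (x₀ + t • u) - f x₀ - ((t * (inner ℝ p u : ℝ) : ℝ) : EReal))

/-- The second-order lower Dini-directional derivative `f''₋(x₀,p,h)`. -/
def secondDini (f : H → EReal) (x₀ p h : H) : EReal :=
  Filter.liminf (fun q : ℝ × H => Delta2 f x₀ p q.1 q.2)
    ((nhdsWithin (0:ℝ) (Set.Ioi 0)) ×ˢ (nhds h))

/-- Weak sequential convergence in a Hilbert space. -/
def WeakTendsto (u : ℕ → H) (x : H) : Prop :=
  ∀ w : H, Tendsto (fun n => (inner ℝ (u n) w : ℝ)) atTop (nhds (inner ℝ x w : ℝ))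

/-- The mixed contingent cone `T_M(gph ∂_p f, (x₀,p))`. -/
def mixedTangent (f : H → EReal) (x₀ p : H) : Set (H × H) :=
  {q | ∃ (t : ℕ → ℝ) (hn zn : ℕ → H),
    (∀ n, 0 < t n) ∧ Tendsto t atTop (nhds 0) ∧
    Tendsto hn atTop (nhds q.1) ∧ WeakTendsto zn q.2 ∧
    ∀ n, p + t n • zn n ∈ proxSubdiff f (x₀ + t n • hn n)}

/-- The second-order mixed graphical derivative `D²_M f(x₀,p)(h)`. -/
def D2M (f : H → EReal) (x₀ p : H) (h : H) : Set H := {z | (h, z) ∈ mixedTangent f x₀ p}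

/-- Dual cone of a subset of `H × H`. -/
def dualConePair (S : Set (H × H)) : Set (H × H) :=
  {q | ∀ w ∈ S, (inner ℝ q.1 w.1 : ℝ) + (inner ℝ q.2 w.2 : ℝ) ≤ 0}

/-- `N_M(gph ∂_p f, (x₀,p))`, the dual cone of the mixed contingent cone. -/
def NM (f : H → EReal) (x₀ p : H) : Set (H × H) := dualConePair (mixedTangent f x₀ p)

/-- The second-order mixed proximal subdifferential `∂²_M f(x₀,p)(h)`. -/
def partial2M (f : H → EReal) (x₀ p : H) (h : H) : Set H := {z | (z, -h) ∈ NM f x₀ p}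

/-- The limiting (Mordukhovich) subdifferential of `g` at `x`. -/
def limitSubdiff (g : H → EReal) (x : H) : Set H :=
  {ζ | ∃ (xn ζn : ℕ → H), Tendsto xn atTop (nhds x) ∧
    Tendsto (fun n => g (xn n)) atTop (nhds (g x)) ∧
    WeakTendsto ζn ζ ∧ ∀ n, ζn n ∈ proxSubdiff g (xn n)}

/-- Epigraph of an `EReal`-valued function, viewed inside `H × ℝ`. -/
def epiE (g : H → EReal) : Set (H × ℝ) := {q | g q.1 ≤ (q.2 : EReal)}

/-- Weak convergence in `H × ℝ`: weak in `H`, usual in `ℝ`. -/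
def WeakTendstoPair (u : ℕ → H × ℝ) (q : H × ℝ) : Prop :=
  WeakTendsto (fun n => (u n).1) q.1 ∧ Tendsto (fun n => (u n).2) atTop (nhds q.2)

/-- Mosco convergence of a sequence of subsets of `H × ℝ` to `L`. -/
def MoscoConv (C : ℕ → Set (H × ℝ)) (L : Set (H × ℝ)) : Prop :=
  (L = {q | ∃ u : ℕ → H × ℝ, (∀ n, u n ∈ C n) ∧ Tendsto u atTop (nhds q)}) ∧
  (L = {q | ∃ (u : ℕ → H × ℝ) (φ : ℕ → ℕ), StrictMono φ ∧ (∀ n, u n ∈ C n) ∧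
      WeakTendstoPair (fun n => u (φ n)) q})

/-- `f` is twice epi-differentiable at `x₀` relative to `p` in the sense of Mosco. -/
def TwiceEpiDiff (f : H → EReal) (x₀ p : H) : Prop :=
  ∃ g : H → EReal, (∀ x, g x ≠ ⊥) ∧ (∃ x, g x ≠ ⊤) ∧
    ∀ t : ℕ → ℝ, (∀ n, 0 < t n) → Tendsto t atTop (nhds 0) →
      MoscoConv (fun n => epiE (fun u => Delta2 f x₀ p (t n) u)) (epiE g)

/-- Concavity on a set for `EReal`-valued functions. -/
def ConcaveOnE {E : Type*} [AddCommGroup E] [Module ℝ E] (s : Set E) (g : E → EReal) : Prop :=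
  ∀ u ∈ s, ∀ v ∈ s, ∀ μ : ℝ, 0 ≤ μ → μ ≤ 1 →
    ((μ : ℝ) : EReal) * g u + ((1 - μ : ℝ) : EReal) * g v ≤ g (μ • u + (1 - μ) • v)

/-- `f` is paraconcave: `f - (1/(2λ))‖·‖²` is concave for some `λ > 0`. -/
def Paraconcave (f : H → EReal) : Prop :=
  ∃ lam > (0:ℝ), ConcaveOnE Set.univ
    (fun x => f x - ((1 / (2 * lam) * ‖x‖ ^ 2 : ℝ) : EReal))

/-- The cone generated by `A - x`. -/
def coneGen {E : Type*} [AddCommGroup E] [Module ℝ E] (A : Set E) (x : E) : Set E :=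
  {y | ∃ t : ℝ, 0 ≤ t ∧ ∃ a ∈ A, y = t • (a - x)}

/-- Quasi-relative interior. -/
def qri {E : Type*} [NormedAddCommGroup E] [NormedSpace ℝ E] (A : Set E) : Set E :=
  {x ∈ A | ∃ S : Submodule ℝ E, closure (coneGen A x) = (S : Set E)}

/-- Strong quasi-relative interior. -/
def sqri {E : Type*} [NormedAddCommGroup E] [NormedSpace ℝ E] (A : Set E) : Set E :=
  {x ∈ A | ∃ S : Submodule ℝ E, IsClosed (S : Set E) ∧ coneGen A x = (S : Set E)}

/-- Second-order optimality condition of the first kind at `x₀`. -/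
def SOC1 (f : H → EReal) (x₀ : H) : Prop :=
  ∃ β > (0:ℝ), ∀ h : H, ‖h‖ = 1 → ((β : ℝ) : EReal) ≤ secondDini f x₀ 0 h

/-- Second-order optimality condition of the second kind at `x₀`. -/
def SOC2 (f : H → EReal) (x₀ : H) : Prop :=
  ∃ β > (0:ℝ), ∀ h : H, ‖h‖ = 1 → (D2M f x₀ 0 h).Nonempty →
    ∃ z ∈ D2M f x₀ 0 h, β ≤ (inner ℝ z h : ℝ)

/-- Second-order optimality condition of the third kind at `x₀`. -/
def SOC3 (f : H → EReal) (x₀ : H) : Prop :=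
  ∃ β > (0:ℝ), ∀ h : H, ‖h‖ = 1 → ∀ z ∈ partial2M f x₀ 0 h, β ≤ (inner ℝ z h : ℝ)

/-- `x₀` is a strict local minimizer of order two for `f`. -/
def StrictLocalMinOrder2 (f : H → EReal) (x₀ : H) : Prop :=
  ∃ β > (0:ℝ), ∃ δ > (0:ℝ), ∀ x ∈ Metric.ball x₀ δ,
    f x₀ + ((β / 2 * ‖x - x₀‖ ^ 2 : ℝ) : EReal) ≤ f x

/-- `f''₋(x₀,p,h) ≥ β` holds uniformly with respect to `h ∈ A`. -/
def UniformDiniGE (f : H → EReal) (x₀ p : H) (β : ℝ) (A : Set H) : Prop :=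
  ∀ ε > (0:ℝ), ∃ δ > (0:ℝ), ∀ t : ℝ, 0 < t → t < δ →
    ∀ h ∈ A + Metric.closedBall (0:H) δ, ((β - ε : ℝ) : EReal) ≤ Delta2 f x₀ p t h


section AuxLemmas

private lemma ereal_sub_coe_ne_bot {A : EReal} (hA : A ≠ ⊥) (r : ℝ) : A - (r : EReal) ≠ ⊥ := by
  rw [sub_eq_add_neg, ← EReal.coe_neg]
  simp [EReal.add_eq_bot_iff, hA]

private lemma ereal_mul_ne_bot {μ : ℝ} (hμ : 0 < μ) {A : EReal} (hA : A ≠ ⊥) :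
    (μ : EReal) * A ≠ ⊥ := by
  induction A using EReal.rec with
  | bot => exact absurd rfl hA
  | coe a => rw [← EReal.coe_mul]; exact EReal.coe_ne_bot _
  | top => rw [EReal.coe_mul_top_of_pos hμ]; simp

private lemma ereal_mul_sub_coe {μ : ℝ} (hμ : 0 < μ) {A : EReal} (hA : A ≠ ⊥) (r : ℝ) :
    (μ : EReal) * (A - (r : EReal)) = (μ : EReal) * A - ((μ * r : ℝ) : EReal) := by
  induction A using EReal.rec with
  | bot => exact absurd rfl hA
  | coe a => norm_cast; ring
  | top => rw [EReal.top_sub_coe, EReal.coe_mul_top_of_pos hμ, EReal.top_sub_coe]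

private lemma ereal_rearrange {A B : EReal} (hA : A ≠ ⊥) (hB : B ≠ ⊥) (r s : ℝ) :
    (A - (r:EReal)) + (B - (s:EReal)) = A + B + ((-(r+s) : ℝ) : EReal) := by
  induction A using EReal.rec with
  | bot => exact absurd rfl hA
  | coe a =>
    induction B using EReal.rec with
    | bot => exact absurd rfl hB
    | coe b => norm_cast; ring
    | top =>
      rw [EReal.top_sub_coe, EReal.coe_add_top]
      rw [show ((a:ℝ):EReal) - (r:EReal) = ((a - r : ℝ) : EReal) by norm_cast]
      rw [EReal.coe_add_top, EReal.top_add_coe]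
  | top =>
    rw [EReal.top_sub_coe]
    rw [EReal.top_add_of_ne_bot (ereal_sub_coe_ne_bot hB s),
        EReal.top_add_of_ne_bot hB, EReal.top_add_coe]

private lemma ereal_add_coe_sub_coe {C : EReal} (hC : C ≠ ⊥) (x y : ℝ) :
    C + (x : EReal) - (y : EReal) = C + ((x - y : ℝ) : EReal) := by
  induction C using EReal.rec with
  | bot => exact absurd rfl hC
  | coe c => norm_cast; ring
  | top => rw [EReal.top_add_coe, EReal.top_sub_coe, EReal.top_add_coe]

private lemma norm_comb_sq (μ : ℝ) (x y : H) :
    ‖μ • x + (1 - μ) • y‖ ^ 2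
      = μ * ‖x‖ ^ 2 + (1 - μ) * ‖y‖ ^ 2 - μ * (1 - μ) * ‖x - y‖ ^ 2 := by
  simp only [← real_inner_self_eq_norm_sq, inner_add_left, inner_add_right,
    inner_sub_left, inner_sub_right, real_inner_smul_left, real_inner_smul_right]
  rw [real_inner_comm y x]
  ring

private lemma inner_comb (p : H) (μ : ℝ) (a b : H) :
    (inner ℝ p (μ • a + (1 - μ) • b) : ℝ) = μ * (inner ℝ p a : ℝ) + (1 - μ) * (inner ℝ p b : ℝ) := by
  rw [inner_add_right, real_inner_smul_right, real_inner_smul_right]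

private lemma key_ineq (f : H → EReal) (hbot : ∀ x, f x ≠ ⊥) (x₀ : H) (hdom : f x₀ ≠ ⊤) (p : H)
    (δ lam : ℝ) (hlam : 0 < lam)
    (hconc : ConcaveOnE (Metric.ball x₀ δ)
      (fun x => f x - ((1 / (2 * lam) * ‖x‖ ^ 2 : ℝ) : EReal)))
    (μ : ℝ) (hμ0 : 0 < μ) (hμ1 : μ < 1)
    (t : ℝ) (ht : 0 < t) (a b : H)
    (ha : x₀ + t • a ∈ Metric.ball x₀ δ) (hb : x₀ + t • b ∈ Metric.ball x₀ δ) :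
    (μ : EReal) * Delta2 f x₀ p t a + ((1 - μ : ℝ) : EReal) * Delta2 f x₀ p t b +
      ((- (1 / lam) * (μ * ‖a‖ ^ 2 + (1 - μ) * ‖b‖ ^ 2 - ‖μ • a + (1 - μ) • b‖ ^ 2) : ℝ) : EReal)
      ≤ Delta2 f x₀ p t (μ • a + (1 - μ) • b) := by
  set c := μ • a + (1 - μ) • b with hcdef
  obtain ⟨r₀, hr₀⟩ : ∃ r : ℝ, f x₀ = (r : EReal) :=
    ⟨(f x₀).toReal, (EReal.coe_toReal hdom (hbot x₀)).symm⟩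
  have hpos : (0:ℝ) < 2 / t ^ 2 := by positivity
  by_cases hc : f (x₀ + t • c) = ⊤
  · simp only [Delta2]
    rw [hc, hr₀, EReal.top_sub_coe, EReal.top_sub_coe, EReal.coe_mul_top_of_pos hpos]
    exact le_top
  · have hν0 : (0:ℝ) < 1 - μ := by linarith
    have H1 := hconc _ ha _ hb μ hμ0.le hμ1.le
    have hcomb : μ • (x₀ + t • a) + (1 - μ) • (x₀ + t • b) = x₀ + t • c := by
      rw [hcdef]; module
    rw [hcomb] at H1
    simp only at H1
    have hfc : f (x₀ + t • c) ≠ ⊥ := hbot _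
    obtain ⟨rc, hrc⟩ : ∃ r : ℝ, f (x₀ + t • c) = (r : EReal) :=
      ⟨_, (EReal.coe_toReal hc hfc).symm⟩
    rw [hrc] at H1
    have hat : f (x₀ + t • a) ≠ ⊤ := by
      intro htop
      rw [htop, EReal.top_sub_coe, EReal.coe_mul_top_of_pos hμ0] at H1
      rw [EReal.top_add_of_ne_bot
        (ereal_mul_ne_bot hν0 (ereal_sub_coe_ne_bot (hbot _) _))] at H1
      rw [show ((rc:ℝ):EReal) - ((1 / (2*lam) * ‖x₀ + t • c‖ ^ 2 : ℝ) : EReal)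
          = ((rc - 1 / (2*lam) * ‖x₀ + t • c‖ ^ 2 : ℝ) : EReal) by norm_cast] at H1
      exact (EReal.coe_lt_top _).not_ge H1
    have hbt : f (x₀ + t • b) ≠ ⊤ := by
      intro htop
      rw [htop, EReal.top_sub_coe, EReal.coe_mul_top_of_pos hν0] at H1
      rw [add_comm] at H1
      rw [EReal.top_add_of_ne_bot
        (ereal_mul_ne_bot hμ0 (ereal_sub_coe_ne_bot (hbot _) _))] at H1
      rw [show ((rc:ℝ):EReal) - ((1 / (2*lam) * ‖x₀ + t • c‖ ^ 2 : ℝ) : EReal)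
          = ((rc - 1 / (2*lam) * ‖x₀ + t • c‖ ^ 2 : ℝ) : EReal) by norm_cast] at H1
      exact (EReal.coe_lt_top _).not_ge H1
    obtain ⟨ra, hra⟩ : ∃ r : ℝ, f (x₀ + t • a) = (r : EReal) :=
      ⟨_, (EReal.coe_toReal hat (hbot _)).symm⟩
    obtain ⟨rb, hrb⟩ : ∃ r : ℝ, f (x₀ + t • b) = (r : EReal) :=
      ⟨_, (EReal.coe_toReal hbt (hbot _)).symm⟩
    rw [hra, hrb] at H1
    have H1r : μ * (ra - 1/(2*lam) * ‖x₀ + t • a‖^2) + (1-μ) * (rb - 1/(2*lam) * ‖x₀ + t • b‖^2)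
        ≤ rc - 1/(2*lam) * ‖x₀ + t • c‖^2 := by exact_mod_cast H1
    have hipc : (inner ℝ p c : ℝ) = μ * (inner ℝ p a : ℝ) + (1 - μ) * (inner ℝ p b : ℝ) := by
      rw [hcdef]; exact inner_comb p μ a b
    have hnc : ‖c‖^2 = μ*‖a‖^2 + (1-μ)*‖b‖^2 - μ*(1-μ)*‖a-b‖^2 := by
      rw [hcdef]; exact norm_comb_sq μ a b
    have hdiff : (x₀ + t • a) - (x₀ + t • b) = t • (a - b) := by module
    have hns : ‖t • (a - b)‖^2 = t^2 * ‖a-b‖^2 := by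
      rw [norm_smul, mul_pow, Real.norm_eq_abs, sq_abs]
    have hnx : ‖x₀ + t • c‖^2
        = μ*‖x₀ + t • a‖^2 + (1-μ)*‖x₀ + t • b‖^2 - μ*(1-μ)*(t^2*‖a-b‖^2) := by
      have h1 := norm_comb_sq μ (x₀ + t • a) (x₀ + t • b)
      rw [hcomb, hdiff, hns] at h1
      linarith [h1]
    rw [hnx] at H1r
    have H2 : μ * ra + (1-μ) * rb ≤ rc + 1/(2*lam)*(μ*(1-μ))*(t^2*‖a-b‖^2) := by
      linarith [H1r]
    have hmul := mul_le_mul_of_nonneg_left H2 hpos.le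
    have ht3 : (2/t^2) * (rc + 1/(2*lam)*(μ*(1-μ))*(t^2*‖a-b‖^2))
        = (2/t^2) * rc + (1/lam)*(μ*(1-μ))*‖a-b‖^2 := by
      field_simp
    rw [ht3] at hmul
    have goalr : μ * ((2/t^2) * (ra - r₀ - t * (inner ℝ p a : ℝ)))
        + (1-μ) * ((2/t^2) * (rb - r₀ - t * (inner ℝ p b : ℝ)))
        + (-(1/lam) * (μ*‖a‖^2 + (1-μ)*‖b‖^2 - ‖c‖^2))
        ≤ (2/t^2) * (rc - r₀ - t * (inner ℝ p c : ℝ)) := by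
      rw [hipc, hnc]
      nlinarith [hmul]
    simp only [Delta2]
    rw [hra, hrb, hrc, hr₀]
    exact_mod_cast goalr

private lemma liminf_helper {α : Type*} {F : Filter α} [F.NeBot] (X Y Z : α → EReal)
    (c : α → ℝ) (c₀ : ℝ) (μ ν : ℝ) (hμ : 0 < μ) (hν : 0 < ν)
    (hc : Tendsto c F (nhds c₀))
    (hev : ∀ᶠ q in F, (μ : EReal) * X q + (ν : EReal) * Y q + ((c q : ℝ) : EReal) ≤ Z q) :
    (μ : EReal) * liminf X F + (ν : EReal) * liminf Y F + (c₀ : EReal) ≤ liminf Z F := by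
  by_cases hX : liminf X F = ⊥
  · rw [hX, EReal.coe_mul_bot_of_pos hμ, EReal.bot_add, EReal.bot_add]
    exact bot_le
  by_cases hY : liminf Y F = ⊥
  · rw [hY, EReal.coe_mul_bot_of_pos hν, EReal.add_bot, EReal.bot_add]
    exact bot_le
  have claim : ∀ x y : ℝ, (x : EReal) < liminf X F → (y : EReal) < liminf Y F →
      ((μ * x + ν * y + c₀ : ℝ) : EReal) ≤ liminf Z F := by
    intro x y hx hy
    rw [← EReal.ge_of_forall_gt_iff_ge]
    intro z hz
    have hz' : z < μ * x + ν * y + c₀ := by exact_mod_cast hz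
    have hε0 : 0 < (μ * x + ν * y + c₀) - z := by linarith
    have h1 : ∀ᶠ q in F, (x : EReal) < X q := eventually_lt_of_lt_liminf hx
    have h2 : ∀ᶠ q in F, (y : EReal) < Y q := eventually_lt_of_lt_liminf hy
    have h3 : ∀ᶠ q in F, c₀ - ((μ * x + ν * y + c₀) - z) < c q :=
      hc.eventually (eventually_gt_nhds (by linarith))
    apply Filter.le_liminf_of_le (by isBoundedDefault)
    filter_upwards [h1, h2, h3, hev] with q hq1 hq2 hq3 hq4
    refine le_trans ?_ hq4
    have e1 : (μ : EReal) * (x : EReal) ≤ (μ : EReal) * X q :=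
      mul_le_mul_of_nonneg_left hq1.le (by exact_mod_cast hμ.le)
    have e2 : (ν : EReal) * (y : EReal) ≤ (ν : EReal) * Y q :=
      mul_le_mul_of_nonneg_left hq2.le (by exact_mod_cast hν.le)
    have e3 : ((c₀ - ((μ * x + ν * y + c₀) - z) : ℝ) : EReal) ≤ ((c q : ℝ) : EReal) := by
      exact_mod_cast hq3.le
    calc (z : EReal)
        = ((μ * x : ℝ) : EReal) + ((ν * y : ℝ) : EReal)
          + ((c₀ - ((μ * x + ν * y + c₀) - z) : ℝ) : EReal) := by norm_cast; ring
      _ ≤ (μ : EReal) * X q + (ν : EReal) * Y q + ((c q : ℝ) : EReal) := by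
          refine add_le_add (add_le_add ?_ ?_) e3
          · rw [EReal.coe_mul]; exact e1
          · rw [EReal.coe_mul]; exact e2
  rw [← EReal.ge_of_forall_gt_iff_ge]
  intro r hr
  by_cases hXt : liminf X F = ⊤
  · by_cases hYt : liminf Y F = ⊤
    · have kk := claim ((r - c₀) / (μ + ν) + 1) ((r - c₀) / (μ + ν) + 1)
        (by rw [hXt]; exact EReal.coe_lt_top _)
        (by rw [hYt]; exact EReal.coe_lt_top _)
      refine le_trans ?_ kk
      have h : (μ + ν) * ((r - c₀) / (μ + ν)) = r - c₀ := by field_simp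
      have : r ≤ μ * ((r - c₀) / (μ + ν) + 1) + ν * ((r - c₀) / (μ + ν) + 1) + c₀ := by
        linarith [h]
      exact_mod_cast this
    · obtain ⟨b, hb⟩ : ∃ b : ℝ, liminf Y F = (b : EReal) :=
        ⟨_, (EReal.coe_toReal hYt hY).symm⟩
      have kk := claim ((r - c₀ - ν * (b - 1)) / μ + 1) (b - 1)
        (by rw [hXt]; exact EReal.coe_lt_top _)
        (by rw [hb]; exact_mod_cast (by linarith : b - 1 < b))
      refine le_trans ?_ kk
      have h : μ * ((r - c₀ - ν * (b - 1)) / μ) = r - c₀ - ν * (b - 1) := by field_simp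
      have : r ≤ μ * ((r - c₀ - ν * (b - 1)) / μ + 1) + ν * (b - 1) + c₀ := by linarith [h]
      exact_mod_cast this
  · obtain ⟨a, ha⟩ : ∃ a : ℝ, liminf X F = (a : EReal) :=
      ⟨_, (EReal.coe_toReal hXt hX).symm⟩
    by_cases hYt : liminf Y F = ⊤
    · have kk := claim (a - 1) ((r - c₀ - μ * (a - 1)) / ν + 1)
        (by rw [ha]; exact_mod_cast (by linarith : a - 1 < a))
        (by rw [hYt]; exact EReal.coe_lt_top _)
      refine le_trans ?_ kk
      have h : ν * ((r - c₀ - μ * (a - 1)) / ν) = r - c₀ - μ * (a - 1) := by field_simp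
      have : r ≤ μ * (a - 1) + ν * ((r - c₀ - μ * (a - 1)) / ν + 1) + c₀ := by linarith [h]
      exact_mod_cast this
    · obtain ⟨b, hb⟩ : ∃ b : ℝ, liminf Y F = (b : EReal) :=
        ⟨_, (EReal.coe_toReal hYt hY).symm⟩
      rw [ha, hb] at hr
      have hr' : r < μ * a + ν * b + c₀ := by exact_mod_cast hr
      set ε := (μ * a + ν * b + c₀ - r) / (μ + ν) with hεd
      have hε : 0 < ε := by apply div_pos (by linarith) (by linarith)
      have kk := claim (a - ε) (b - ε)
        (by rw [ha]; exact_mod_cast (by linarith : a - ε < a))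
        (by rw [hb]; exact_mod_cast (by linarith : b - ε < b))
      refine le_trans ?_ kk
      have h : (μ + ν) * ((μ * a + ν * b + c₀ - r) / (μ + ν)) = μ * a + ν * b + c₀ - r := by
        field_simp
      have hεd' : ε = (μ * a + ν * b + c₀ - r) / (μ + ν) := hεd
      have : r ≤ μ * (a - ε) + ν * (b - ε) + c₀ := by rw [hεd']; linarith [h]
      exact_mod_cast this

private lemma secondDini_shift (f : H → EReal) (x₀ p : H) (w d : H) :
    secondDini f x₀ p (w + d) =
      liminf (fun q : ℝ × H => Delta2 f x₀ p q.1 (q.2 + d))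
        ((nhdsWithin (0:ℝ) (Set.Ioi 0)) ×ˢ nhds w) := by
  have h1 : (nhdsWithin (0:ℝ) (Set.Ioi 0)) ×ˢ (nhds (w + d)) =
      map (fun q : ℝ × H => (q.1, q.2 + d)) ((nhdsWithin (0:ℝ) (Set.Ioi 0)) ×ˢ nhds w) := by
    rw [← map_add_right_nhds d w, Filter.prod_map_right]
    rfl
  rw [secondDini, h1, ← Filter.liminf_comp]
  rfl

end AuxLemmas

theorem secondDini_paraconcave_ball (f : H → EReal) (hlsc : LowerSemicontinuous f) (hbot : ∀ x, f x ≠ ⊥)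
    (hproper : ∃ x, f x ≠ ⊤) (x₀ : H) (hdom : f x₀ ≠ ⊤) (p : H) (hp : p ∈ proxSubdiff f x₀)
    (δ lam : ℝ) (hδ : 0 < δ) (hlam : 0 < lam)
    (hconc : ConcaveOnE (Metric.ball x₀ δ)
      (fun x => f x - ((1 / (2 * lam) * ‖x‖ ^ 2 : ℝ) : EReal))) :
    ∀ u ∈ Metric.ball x₀ δ, ∀ v ∈ Metric.ball x₀ δ, ∀ μ : ℝ, 0 ≤ μ → μ ≤ 1 →
      ((μ : ℝ) : EReal) * (secondDini f x₀ p u - ((1 / lam * ‖u‖ ^ 2 : ℝ) : EReal)) +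
        ((1 - μ : ℝ) : EReal) * (secondDini f x₀ p v - ((1 / lam * ‖v‖ ^ 2 : ℝ) : EReal)) ≤
      secondDini f x₀ p (μ • u + (1 - μ) • v) -
        ((1 / lam * ‖μ • u + (1 - μ) • v‖ ^ 2 : ℝ) : EReal) := by
  intro u hu v hv μ hμ0 hμ1
  rcases eq_or_lt_of_le hμ0 with h0 | h0
  · rw [← h0]
    norm_num
  rcases eq_or_lt_of_le hμ1 with h1 | h1
  · rw [h1]
    norm_num
  have hν0 : (0:ℝ) < 1 - μ := by linarith
  set w := μ • u + (1 - μ) • v with hw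
  by_cases hSU : secondDini f x₀ p u = ⊥
  · rw [hSU, sub_eq_add_neg, EReal.bot_add, EReal.coe_mul_bot_of_pos h0, EReal.bot_add]
    exact bot_le
  by_cases hSV : secondDini f x₀ p v = ⊥
  · have hb : (⊥ : EReal) - ((1 / lam * ‖v‖ ^ 2 : ℝ) : EReal) = ⊥ := by
      rw [sub_eq_add_neg, EReal.bot_add]
    rw [hSV, hb, EReal.coe_mul_bot_of_pos hν0, EReal.add_bot]
    exact bot_le
  set F := (nhdsWithin (0:ℝ) (Set.Ioi 0)) ×ˢ (nhds w) with hF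
  haveI : F.NeBot := by rw [hF]; infer_instance
  have hXdef : secondDini f x₀ p u
      = liminf (fun q : ℝ × H => Delta2 f x₀ p q.1 (q.2 + (u - w))) F := by
    have h := secondDini_shift f x₀ p w (u - w)
    rw [add_comm w (u - w), sub_add_cancel] at h
    exact h
  have hYdef : secondDini f x₀ p v
      = liminf (fun q : ℝ × H => Delta2 f x₀ p q.1 (q.2 + (v - w))) F := by
    have h := secondDini_shift f x₀ p w (v - w)
    rw [add_comm w (v - w), sub_add_cancel] at h
    exact h
  have hZdef : secondDini f x₀ p w
      = liminf (fun q : ℝ × H => Delta2 f x₀ p q.1 q.2) F := rfl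
  have hFle : F ≤ (nhds ((0:ℝ), w)) := by
    rw [nhds_prod_eq, hF]
    exact Filter.prod_mono nhdsWithin_le_nhds le_rfl
  have hsnd : Tendsto (fun q : ℝ × H => q.2) F (nhds w) := tendsto_snd
  have hccont : Continuous (fun h : H =>
      -(1/lam) * (μ * ‖h + (u - w)‖^2 + (1-μ) * ‖h + (v - w)‖^2 - ‖h‖^2)) := by
    fun_prop
  have hctend : Tendsto
      (fun q : ℝ × H => -(1/lam) * (μ * ‖q.2 + (u - w)‖^2 + (1-μ) * ‖q.2 + (v - w)‖^2 - ‖q.2‖^2))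
      F (nhds (-(1/lam) * (μ * ‖u‖^2 + (1-μ) * ‖v‖^2 - ‖w‖^2))) := by
    have h := (hccont.tendsto w).comp hsnd
    rw [show w + (u - w) = u by rw [add_comm, sub_add_cancel],
        show w + (v - w) = v by rw [add_comm, sub_add_cancel]] at h
    exact h
  have e1 : ∀ᶠ q : ℝ × H in F, 0 < q.1 := by
    rw [hF]
    exact Filter.Eventually.prod_inl (eventually_mem_nhdsWithin) _
  have e2 : ∀ᶠ q : ℝ × H in F, ‖q.1 • (q.2 + (u - w))‖ < δ := by
    have g1 : Continuous (fun q : ℝ × H => ‖q.1 • (q.2 + (u - w))‖) := by fun_prop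
    have h := (g1.tendsto ((0:ℝ), w)).mono_left hFle
    simp only [zero_smul, norm_zero] at h
    exact h.eventually_lt_const hδ
  have e3 : ∀ᶠ q : ℝ × H in F, ‖q.1 • (q.2 + (v - w))‖ < δ := by
    have g1 : Continuous (fun q : ℝ × H => ‖q.1 • (q.2 + (v - w))‖) := by fun_prop
    have h := (g1.tendsto ((0:ℝ), w)).mono_left hFle
    simp only [zero_smul, norm_zero] at h
    exact h.eventually_lt_const hδ
  have hev : ∀ᶠ q : ℝ × H in F,
      (μ : EReal) * (fun q : ℝ × H => Delta2 f x₀ p q.1 (q.2 + (u - w))) q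
      + ((1 - μ : ℝ) : EReal) * (fun q : ℝ × H => Delta2 f x₀ p q.1 (q.2 + (v - w))) q
      + ((-(1/lam) * (μ * ‖q.2 + (u - w)‖^2 + (1-μ) * ‖q.2 + (v - w)‖^2 - ‖q.2‖^2) : ℝ) : EReal)
      ≤ (fun q : ℝ × H => Delta2 f x₀ p q.1 q.2) q := by
    filter_upwards [e1, e2, e3] with q hq1 hq2 hq3
    have hmema : x₀ + q.1 • (q.2 + (u - w)) ∈ Metric.ball x₀ δ := by
      rw [Metric.mem_ball, dist_eq_norm, add_sub_cancel_left]
      exact hq2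
    have hmemb : x₀ + q.1 • (q.2 + (v - w)) ∈ Metric.ball x₀ δ := by
      rw [Metric.mem_ball, dist_eq_norm, add_sub_cancel_left]
      exact hq3
    have hk := key_ineq f hbot x₀ hdom p δ lam hlam hconc μ h0 h1 q.1 hq1
      (q.2 + (u - w)) (q.2 + (v - w)) hmema hmemb
    have hcb : μ • (q.2 + (u - w)) + (1 - μ) • (q.2 + (v - w)) = q.2 := by
      rw [hw]; module
    rw [hcb] at hk
    exact hk
  have main := liminf_helper (F := F)
    (fun q : ℝ × H => Delta2 f x₀ p q.1 (q.2 + (u - w)))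
    (fun q : ℝ × H => Delta2 f x₀ p q.1 (q.2 + (v - w)))
    (fun q : ℝ × H => Delta2 f x₀ p q.1 q.2)
    (fun q : ℝ × H => -(1/lam) * (μ * ‖q.2 + (u - w)‖^2 + (1-μ) * ‖q.2 + (v - w)‖^2 - ‖q.2‖^2))
    (-(1/lam) * (μ * ‖u‖^2 + (1-μ) * ‖v‖^2 - ‖w‖^2)) μ (1 - μ) h0 hν0 hctend hev
  rw [← hXdef, ← hYdef, ← hZdef] at main
  rw [ereal_mul_sub_coe h0 hSU, ereal_mul_sub_coe hν0 hSV]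
  rw [ereal_rearrange (ereal_mul_ne_bot h0 hSU) (ereal_mul_ne_bot hν0 hSV)]
  have hC : (μ : EReal) * secondDini f x₀ p u + ((1 - μ : ℝ) : EReal) * secondDini f x₀ p v
      ≠ ⊥ := by
    intro hbad
    rcases EReal.add_eq_bot_iff.1 hbad with h | h
    · exact ereal_mul_ne_bot h0 hSU h
    · exact ereal_mul_ne_bot hν0 hSV h
  have e4 : ((-(μ * (1 / lam * ‖u‖ ^ 2) + (1 - μ) * (1 / lam * ‖v‖ ^ 2)) : ℝ) : EReal)
      = (((-(1/lam) * (μ * ‖u‖^2 + (1-μ) * ‖v‖^2 - ‖w‖^2)) - (1 / lam * ‖w‖ ^ 2) : ℝ) : EReal) := by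
    norm_cast
    ring
  rw [e4, ← ereal_add_coe_sub_coe hC]
  exact EReal.sub_le_sub main (le_refl _)
end
end

section
/- Let H be a real Hilbert space, f : H → ℝ ∪ {+∞} a proper lower semicontinuous function, x̄ ∈ dom f and p ∈ ∂_p f(x̄). For every (h, r) ∈ epi(½f''₋(x̄, p, ·)) there exist sequences t_k → 0⁺ and (h_k, r_k) → (h, r) in norm with (h_k, r_k) ∈ epi(½Δ₂f(x̄, p, t_k, ·)) for all k; that is, epi(½f''₋(x̄, p, ·)) ⊆ limsup_{t→0⁺} epi(½Δ₂f(x̄, p, t, ·)). -/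
open Filter Topology Set Pointwise

noncomputable section

variable {H : Type*} [NormedAddCommGroup H] [InnerProductSpace ℝ H] [CompleteSpace H]

private lemma aux_half_mul_le' {a : EReal} {c : ℝ} (h : a ≤ ((2*c : ℝ) : EReal)) :
    ((1/2:ℝ):EReal) * a ≤ ((c:ℝ):EReal) := by
  induction a using EReal.rec with
  | bot => rw [EReal.mul_bot_of_pos (by norm_num)]; exact bot_le
  | coe a =>
      rw [← EReal.coe_mul]
      exact_mod_cast by linarith [EReal.coe_le_coe_iff.mp h]
  | top => exact absurd (top_le_iff.mp h) (EReal.coe_ne_top _)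

private lemma aux_le_two_mul' {a : EReal} {r : ℝ} (h : ((1/2:ℝ):EReal) * a ≤ (r:EReal)) :
    a ≤ ((2*r:ℝ):EReal) := by
  induction a using EReal.rec with
  | bot => exact bot_le
  | coe a =>
      rw [← EReal.coe_mul] at h
      exact_mod_cast by linarith [EReal.coe_le_coe_iff.mp h]
  | top =>
      rw [EReal.mul_top_of_pos (by norm_num)] at h
      exact absurd h (by simp)

theorem epi_secondDini_subset_limsup_epi (f : H → EReal) (hlsc : LowerSemicontinuous f) (hbot : ∀ x, f x ≠ ⊥)
    (hproper : ∃ x, f x ≠ ⊤) (x₀ : H) (hdom : f x₀ ≠ ⊤) (p : H) (hp : p ∈ proxSubdiff f x₀) :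
    ∀ (h : H) (r : ℝ), (h, r) ∈ epiE (fun u => ((1 / 2 : ℝ) : EReal) * secondDini f x₀ p u) →
      ∃ (t : ℕ → ℝ) (hk : ℕ → H) (rk : ℕ → ℝ), (∀ k, 0 < t k) ∧
        Tendsto t atTop (nhds (0:ℝ)) ∧ Tendsto hk atTop (nhds h) ∧
        Tendsto rk atTop (nhds r) ∧
        ∀ k, (hk k, rk k) ∈ epiE (fun u => ((1 / 2 : ℝ) : EReal) * Delta2 f x₀ p (t k) u) := by
  intro h r hr
  have hsec : secondDini f x₀ p h ≤ ((2*r:ℝ):EReal) := aux_le_two_mul' hr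
  have key : ∀ k : ℕ, ∃ q : ℝ × H, (0 < q.1 ∧ q.1 < 1/(k+1) ∧ ‖q.2 - h‖ < 1/(k+1)) ∧
      Delta2 f x₀ p q.1 q.2 < ((2*r + 1/(k+1) : ℝ) : EReal) := by
    intro k
    have hlt : secondDini f x₀ p h < ((2*r + 1/(k+1):ℝ):EReal) := by
      refine lt_of_le_of_lt hsec ?_
      have hk1 : (0:ℝ) < 1/((k:ℝ)+1) := by positivity
      exact_mod_cast by push_cast; linarith
    have hfreq : ∃ᶠ q : ℝ × H in (nhdsWithin (0:ℝ) (Set.Ioi 0)) ×ˢ nhds h,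
        Delta2 f x₀ p q.1 q.2 < ((2*r + 1/(k+1):ℝ):EReal) :=
      frequently_lt_of_liminf_lt (h := hlt)
    have hev : ∀ᶠ q : ℝ × H in (nhdsWithin (0:ℝ) (Set.Ioi 0)) ×ˢ nhds h,
        0 < q.1 ∧ q.1 < 1/(k+1) ∧ ‖q.2 - h‖ < 1/(k+1) := by
      have h1 : ∀ᶠ t : ℝ in nhdsWithin (0:ℝ) (Set.Ioi 0), 0 < t ∧ t < 1/(k+1) := by
        filter_upwards [self_mem_nhdsWithin, Ioo_mem_nhdsGT_of_mem
          (by constructor <;> positivity : (0:ℝ) ∈ Ico (0:ℝ) (1/(k+1)))] with t ht ht'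
        exact ⟨ht, ht'.2⟩
      have h2 : ∀ᶠ x : H in nhds h, ‖x - h‖ < 1/(k+1) := by
        filter_upwards [Metric.ball_mem_nhds h (by positivity : (0:ℝ) < 1/(k+1))] with x hx
        simpa [dist_eq_norm] using hx
      filter_upwards [h1.prod_mk h2] with q hq
      exact ⟨hq.1.1, hq.1.2, hq.2⟩
    obtain ⟨q, hq1, hq2⟩ := (hfreq.and_eventually hev).exists
    exact ⟨q, hq2, hq1⟩
  choose q hq hΔ using key
  refine ⟨fun k => (q k).1, fun k => (q k).2, fun k => r + 1/(2*(k+1)), fun k => (hq k).1,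
    ?_, ?_, ?_, ?_⟩
  · apply squeeze_zero (fun k => (hq k).1.le) (fun k => (hq k).2.1.le)
    exact tendsto_one_div_add_atTop_nhds_zero_nat
  · rw [tendsto_iff_norm_sub_tendsto_zero]
    apply squeeze_zero (fun k => norm_nonneg _) (fun k => (hq k).2.2.le)
    exact tendsto_one_div_add_atTop_nhds_zero_nat
  · have : Tendsto (fun k : ℕ => r + 1/(2*(k+1))) atTop (nhds (r + 0)) := by
      apply tendsto_const_nhds.add
      have := (tendsto_one_div_add_atTop_nhds_zero_nat (𝕜 := ℝ)).div_const 2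
      simpa [div_div, mul_comm, div_eq_mul_inv] using this
    simpa using this
  · intro k
    refine aux_half_mul_le' (le_of_lt ?_)
    have : (2*(r + 1/(2*(k+1))) : ℝ) = 2*r + 1/(k+1) := by field_simp
    rw [this]
    exact hΔ k
end
end

section
/- Let H be a real Hilbert space, f : H → ℝ ∪ {+∞} a proper lower semicontinuous paraconcave function, x̄ ∈ dom f with 0 ∈ ∂_p f(x̄). Suppose f is continuous at x̄ and twice epi-differentiable at x̄ relative to 0 in the sense of Mosco. If f satisfies the second-order optimality condition of the first kind at x̄, then f satisfies the second-order optimality condition of the second kind at x̄. -/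
open Filter Topology Set Pointwise

noncomputable section

variable {H : Type*} [NormedAddCommGroup H] [InnerProductSpace ℝ H] [CompleteSpace H]

section AuxLemmas

lemma coe_mul_ne_bot' (c : ℝ) (x : EReal) (h : x ≠ ⊥) (hc : 0 < c) : (c:EReal) * x ≠ ⊥ := by
  induction x using EReal.rec with
  | bot => exact absurd rfl h
  | coe r => rw [← EReal.coe_mul]; exact EReal.coe_ne_bot _
  | top => rw [EReal.mul_top_of_pos (by exact_mod_cast hc)]; exact top_ne_bot

lemma supergrad_aux {Γ : H → ℝ}
    (hconc : ∀ u v : H, ∀ μ : ℝ, 0 ≤ μ → μ ≤ 1 →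
      μ * Γ u + (1 - μ) * Γ v ≤ Γ (μ • u + (1 - μ) • v))
    (x ξ : H) (C δ : ℝ) (hδ : 0 < δ)
    (hloc : ∀ y : H, ‖y - x‖ < δ → Γ x + (inner ℝ ξ (y - x) : ℝ) - C * ‖y - x‖ ^ 2 ≤ Γ y)
    (u : H) : Γ u ≤ Γ x + (inner ℝ ξ (u - x) : ℝ) := by
  rcases eq_or_ne u x with rfl | hux
  · simp
  set d := u - x with hd
  have hdnorm : 0 < ‖d‖ := by
    rw [hd, norm_pos_iff, sub_ne_zero]; exact hux
  have key : ∀ μ : ℝ, 0 < μ → μ ≤ 1 → μ * ‖d‖ < δ →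
      Γ u - Γ x - (inner ℝ ξ d : ℝ) ≤ C * μ * ‖d‖ ^ 2 := by
    intro μ hμ0 hμ1 hμδ
    have hlow := hconc u x μ hμ0.le hμ1
    have hpt : μ • u + (1 - μ) • x = x + μ • d := by
      rw [hd]; module
    rw [hpt] at hlow
    have hmid := hconc (x + μ • d) (x - μ • d) (1/2) (by norm_num) (by norm_num)
    have hpt2 : (1/2 : ℝ) • (x + μ • d) + (1 - 1/2 : ℝ) • (x - μ • d) = x := by
      module
    rw [hpt2] at hmid
    have hloc2 : Γ x + (inner ℝ ξ (-(μ • d)) : ℝ) - C * ‖-(μ • d)‖ ^ 2 ≤ Γ (x - μ • d) := by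
      have := hloc (x - μ • d) (by
        rw [sub_sub_cancel_left, norm_neg, norm_smul, Real.norm_eq_abs, abs_of_pos hμ0]
        exact hμδ)
      rw [sub_sub_cancel_left] at this
      exact this
    rw [inner_neg_right, real_inner_smul_right, norm_neg, norm_smul, Real.norm_eq_abs,
      abs_of_pos hμ0] at hloc2
    have h1 : μ * Γ u + (1 - μ) * Γ x ≤ Γ x + μ * (inner ℝ ξ d : ℝ) + C * (μ * ‖d‖)^2 := by
      nlinarith [hlow, hmid, hloc2]
    have := (mul_le_mul_iff_right₀ hμ0).mp (by nlinarith :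
      μ * (Γ u - Γ x - (inner ℝ ξ d : ℝ)) ≤ μ * (C * μ * ‖d‖^2))
    linarith
  by_contra hcon
  push_neg at hcon
  set a := Γ u - Γ x - (inner ℝ ξ d : ℝ) with ha
  have ha0 : 0 < a := by rw [ha]; linarith
  set μ := min (min 1 (δ / (2 * ‖d‖))) (a / (2 * (|C| * ‖d‖ ^ 2 + 1))) with hμ
  have hμ0 : 0 < μ := by
    apply lt_min (lt_min one_pos (by positivity)) (by positivity)
  have hμ1 : μ ≤ 1 := le_trans (min_le_left _ _) (min_le_left _ _)
  have hμδ : μ * ‖d‖ < δ := by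
    have : μ ≤ δ / (2 * ‖d‖) := le_trans (min_le_left _ _) (min_le_right _ _)
    calc μ * ‖d‖ ≤ (δ / (2 * ‖d‖)) * ‖d‖ := by nlinarith
    _ = δ / 2 := by field_simp
    _ < δ := by linarith
  have hk := key μ hμ0 hμ1 hμδ
  have hμa : μ ≤ a / (2 * (|C| * ‖d‖ ^ 2 + 1)) := min_le_right _ _
  have h1 : μ * (2 * (|C| * ‖d‖ ^ 2 + 1)) ≤ a := by
    rw [le_div_iff₀ (by positivity)] at hμa
    linarith
  nlinarith [hk, hμ0, abs_nonneg C, sq_nonneg ‖d‖, le_abs_self C, h1,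
    mul_le_mul_of_nonneg_right (mul_le_mul_of_nonneg_left (le_abs_self C) hμ0.le) (sq_nonneg ‖d‖)]

lemma fin_of_para (f : H → EReal) (hbot : ∀ x, f x ≠ ⊥) (lam : ℝ)
    (hconc : ConcaveOnE Set.univ (fun x => f x - ((1 / (2 * lam) * ‖x‖ ^ 2 : ℝ) : EReal)))
    (x₀ : H) (hx₀ : f x₀ ≠ ⊤) : ∀ u, f u ≠ ⊤ := by
  intro u hu
  have h := hconc u trivial ((2:ℝ) • x₀ - u) trivial (1/2) (by norm_num) (by norm_num)
  dsimp only at h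
  have hpt : ((1/2:ℝ)) • u + ((1 - 1/2:ℝ)) • ((2:ℝ) • x₀ - u) = x₀ := by module
  rw [hpt] at h
  have h1 : f u - ((1 / (2 * lam) * ‖u‖ ^ 2 : ℝ) : EReal) = ⊤ := by
    rw [hu]; exact EReal.top_sub_coe _
  rw [h1] at h
  have h2 : f ((2:ℝ) • x₀ - u) - ((1 / (2 * lam) * ‖(2:ℝ) • x₀ - u‖ ^ 2 : ℝ) : EReal) ≠ ⊥ := by
    rw [sub_eq_add_neg, ← EReal.coe_neg, Ne, EReal.add_eq_bot_iff]
    push_neg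
    exact ⟨hbot _, EReal.coe_ne_bot _⟩
  have h3 : ((1 - 1/2 : ℝ) : EReal) * (f ((2:ℝ) • x₀ - u) -
      ((1 / (2 * lam) * ‖(2:ℝ) • x₀ - u‖ ^ 2 : ℝ) : EReal)) ≠ ⊥ := by
    apply coe_mul_ne_bot' _ _ h2; norm_num
  rw [EReal.mul_top_of_pos (by norm_num : (0:EReal) < ((1/2:ℝ):EReal)),
    EReal.top_add_of_ne_bot h3] at h
  have h4 : f x₀ - ((1 / (2 * lam) * ‖x₀‖ ^ 2 : ℝ) : EReal) ≠ ⊤ := by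
    rw [sub_eq_add_neg, ← EReal.coe_neg]
    exact (EReal.add_lt_top hx₀ (EReal.coe_ne_top _)).ne
  exact h4 (top_le_iff.mp h)

lemma concave_real (f : H → EReal) (φ : H → ℝ) (hφ : ∀ x, f x = ((φ x : ℝ) : EReal)) (lam : ℝ)
    (hconc : ConcaveOnE Set.univ (fun x => f x - ((1 / (2 * lam) * ‖x‖ ^ 2 : ℝ) : EReal))) :
    ∀ u v : H, ∀ μ : ℝ, 0 ≤ μ → μ ≤ 1 →
      μ * (φ u - 1 / (2 * lam) * ‖u‖ ^ 2) + (1 - μ) * (φ v - 1 / (2 * lam) * ‖v‖ ^ 2)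
        ≤ φ (μ • u + (1 - μ) • v) - 1 / (2 * lam) * ‖μ • u + (1 - μ) • v‖ ^ 2 := by
  intro u v μ h0 h1
  have h := hconc u trivial v trivial μ h0 h1
  dsimp only at h
  rw [hφ, hφ, hφ, ← EReal.coe_sub, ← EReal.coe_sub, ← EReal.coe_sub, ← EReal.coe_mul,
    ← EReal.coe_mul, ← EReal.coe_add, EReal.coe_le_coe_iff] at h
  exact h

lemma key1 (f : H → EReal) (φ : H → ℝ) (hφ : ∀ x, f x = ((φ x : ℝ) : EReal))
    (lam : ℝ) (hlam : 0 < lam)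
    (hconc : ConcaveOnE Set.univ (fun x => f x - ((1 / (2 * lam) * ‖x‖ ^ 2 : ℝ) : EReal)))
    (x ζ : H) (hζ : ζ ∈ proxSubdiff f x) (u : H) :
    φ u ≤ φ x + (inner ℝ ζ (u - x) : ℝ) + 1 / (2 * lam) * ‖u - x‖ ^ 2 := by
  obtain ⟨σ, hσ, δ, hδ, hball⟩ := hζ
  have hc := concave_real f φ hφ lam hconc
  have he : (1:ℝ)/lam = 2 * (1/(2*lam)) := by field_simp
  have hloc : ∀ y : H, ‖y - x‖ < δ →
      (φ x - 1/(2*lam)*‖x‖^2) + (inner ℝ (ζ - (1/lam) • x) (y-x) : ℝ)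
        - (σ/2 + 1/(2*lam)) * ‖y-x‖^2 ≤ (φ y - 1/(2*lam)*‖y‖^2) := by
    intro y hy
    have hb := hball y (by rw [Metric.mem_ball, dist_eq_norm]; exact hy)
    rw [hφ, hφ, ← EReal.coe_add, EReal.coe_le_coe_iff] at hb
    have hexp : ‖y‖^2 = ‖x‖^2 + 2 * (inner ℝ x (y-x):ℝ) + ‖y-x‖^2 := by
      have := norm_add_sq_real x (y - x); rw [add_sub_cancel] at this; linarith
    have hin : (inner ℝ (ζ - (1/lam) • x) (y-x) : ℝ)
        = (inner ℝ ζ (y-x):ℝ) - (1/lam) * (inner ℝ x (y-x):ℝ) := by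
      rw [inner_sub_left, real_inner_smul_left]
    rw [hin, hexp]
    nlinarith [hb]
  have hsg := supergrad_aux (Γ := fun y => φ y - 1/(2*lam)*‖y‖^2)
    (fun u v μ h0 h1 => hc u v μ h0 h1) x (ζ - (1/lam) • x) (σ/2 + 1/(2*lam)) δ hδ hloc u
  have hexp : ‖u‖^2 = ‖x‖^2 + 2 * (inner ℝ x (u-x):ℝ) + ‖u-x‖^2 := by
    have := norm_add_sq_real x (u - x); rw [add_sub_cancel] at this; linarith
  have hin : (inner ℝ (ζ - (1/lam) • x) (u-x) : ℝ)
      = (inner ℝ ζ (u-x):ℝ) - (1/lam) * (inner ℝ x (u-x):ℝ) := by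
    rw [inner_sub_left, real_inner_smul_left]
  rw [hin, hexp] at hsg
  nlinarith [hsg]

lemma midpt (φ : H → ℝ) (lam : ℝ) (hlam : 0 < lam)
    (hc : ∀ u v : H, ∀ μ : ℝ, 0 ≤ μ → μ ≤ 1 →
      μ * (φ u - 1 / (2 * lam) * ‖u‖ ^ 2) + (1 - μ) * (φ v - 1 / (2 * lam) * ‖v‖ ^ 2)
        ≤ φ (μ • u + (1 - μ) • v) - 1 / (2 * lam) * ‖μ • u + (1 - μ) • v‖ ^ 2)
    (a b : H) :
    (1/2)*φ a + (1/2)*φ b - 1/(8*lam)*‖a-b‖^2 ≤ φ ((1/2:ℝ) • a + (1/2:ℝ) • b) := by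
  have h := hc a b (1/2) (by norm_num) (by norm_num)
  have h2 : (1 - 1/2 : ℝ) = 1/2 := by norm_num
  rw [h2] at h
  have hpar := parallelogram_law_with_norm ℝ a b
  have hmid : ‖(1/2:ℝ) • a + (1/2:ℝ) • b‖ = (1/2) * ‖a + b‖ := by
    rw [← smul_add, norm_smul, Real.norm_eq_abs]
    norm_num
  have hsq : ‖(1/2:ℝ) • a + (1/2:ℝ) • b‖^2 = (1/4) * ‖a+b‖^2 := by
    rw [hmid]; ring
  rw [hsq] at h
  have e1 : ‖a+b‖ * ‖a+b‖ = ‖a+b‖^2 := by ring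
  have e2 : ‖a-b‖ * ‖a-b‖ = ‖a-b‖^2 := by ring
  have e3 : ‖a‖ * ‖a‖ = ‖a‖^2 := by ring
  have e4 : ‖b‖ * ‖b‖ = ‖b‖^2 := by ring
  have e5 : 1/(2*lam) = 4 * (1/(8*lam)) := by field_simp; ring
  rw [e5] at h
  have h6 : (1/(8*lam)) * (‖a+b‖^2 + ‖a-b‖^2) = (1/(8*lam)) * (2*(‖a‖^2+‖b‖^2)) := by
    rw [hpar]
  ring_nf at h h6 ⊢
  linarith [h, h6]

end AuxLemmas

set_option maxHeartbeats 1000000 in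
theorem soc1_implies_soc2 (f : H → EReal) (hlsc : LowerSemicontinuous f) (hbot : ∀ x, f x ≠ ⊥)
    (hproper : ∃ x, f x ≠ ⊤) (x₀ : H) (hdom : f x₀ ≠ ⊤) (hpara : Paraconcave f)
    (hp0 : (0:H) ∈ proxSubdiff f x₀) (hcont : ContinuousAt f x₀)
    (hted : TwiceEpiDiff f x₀ 0) :
    SOC1 f x₀ → SOC2 f x₀ := by
  rintro ⟨β, hβ, hsoc⟩
  obtain ⟨lam, hlam, hconc⟩ := hpara
  have hfin : ∀ x, f x ≠ ⊤ := fin_of_para f hbot lam hconc x₀ hdom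
  set φ : H → ℝ := fun x => (f x).toReal with hφdef
  have hφ : ∀ x, f x = ((φ x : ℝ) : EReal) := fun x => (EReal.coe_toReal (hfin x) (hbot x)).symm
  set Δ : ℝ → H → ℝ := fun s u => (2 / s ^ 2) * (φ (x₀ + s • u) - φ x₀) with hΔdef
  have hΔcoe : ∀ s : ℝ, ∀ u : H, Delta2 f x₀ 0 s u = ((Δ s u : ℝ) : EReal) := by
    intro s u
    simp only [Delta2, hφ, inner_zero_left, mul_zero, EReal.coe_zero, sub_zero,
      ← EReal.coe_sub, ← EReal.coe_mul, hΔdef]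
  have hcreal := concave_real f φ hφ lam hconc
  have hkey : ∀ (x ζ : H), ζ ∈ proxSubdiff f x → ∀ u : H,
      φ u ≤ φ x + (inner ℝ ζ (u - x) : ℝ) + 1/(2*lam) * ‖u - x‖^2 :=
    fun x ζ hζ u => key1 f φ hφ lam hlam hconc x ζ hζ u
  have hscale : ∀ s τ : ℝ, 0 < s → 0 < τ → ∀ u : H,
      Δ τ u = s^2 * Δ (s * τ) (s⁻¹ • u) := by
    intro s τ hs hτ u
    have hpt : x₀ + (s*τ) • (s⁻¹ • u) = x₀ + τ • u := by
      rw [smul_smul, mul_comm s τ, mul_assoc, mul_inv_cancel₀ hs.ne', mul_one]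
    rw [hΔdef]
    dsimp only
    rw [hpt]
    field_simp
  refine ⟨β/2, by linarith, fun h hh hne => ?_⟩
  obtain ⟨z, hzD⟩ := hne
  obtain ⟨t, vs, zn, htpos, ht0, hhn, hzn, hmem⟩ := hzD
  refine ⟨z, ⟨t, vs, zn, htpos, ht0, hhn, hzn, hmem⟩, ?_⟩
  set sD := secondDini f x₀ 0 h with hsDdef
  have hβsD : ((β:ℝ) : EReal) ≤ sD := hsoc h hh
  -- lower Dini bound transferred to sequences
  have hseq : ∀ (τ : ℕ → ℝ) (w : ℕ → H), (∀ᶠ n in atTop, 0 < τ n) →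
      Tendsto τ atTop (nhds 0) → Tendsto w atTop (nhds h) →
      ∀ c : ℝ, ((c:ℝ) : EReal) < sD → ∀ᶠ n in atTop, c < Δ (τ n) (w n) := by
    intro τ w hτpos hτ0 hw c hc
    have hev : ∀ᶠ q in ((nhdsWithin (0:ℝ) (Set.Ioi 0)) ×ˢ (nhds h)),
        ((c:ℝ) : EReal) < Delta2 f x₀ 0 q.1 q.2 := eventually_lt_of_lt_liminf hc
    have htend : Tendsto (fun n => (τ n, w n)) atTop
        ((nhdsWithin (0:ℝ) (Set.Ioi 0)) ×ˢ (nhds h)) := by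
      rw [Filter.tendsto_prod_iff']
      exact ⟨tendsto_nhdsWithin_iff.mpr ⟨hτ0, hτpos⟩, hw⟩
    filter_upwards [htend.eventually hev] with n hn2
    rw [hΔcoe] at hn2
    exact_mod_cast hn2
  -- sD is not ⊥
  obtain ⟨σ₀, hσ₀, δ₀, hδ₀, hball₀⟩ := hp0
  have hφball : ∀ y ∈ Metric.ball x₀ δ₀, φ x₀ - σ₀/2 * ‖y - x₀‖^2 ≤ φ y := by
    intro y hy
    have hb := hball₀ y hy
    rw [hφ, hφ, inner_zero_left, ← EReal.coe_add, EReal.coe_le_coe_iff] at hb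
    linarith
  have hlb : ((-(4*σ₀) : ℝ) : EReal) ≤ sD := by
    rw [hsDdef, secondDini]
    refine Filter.le_liminf_of_le (by isBoundedDefault) ?_
    have hmemS : (Set.Ioo (0:ℝ) (δ₀ / 2) ×ˢ Metric.ball h 1) ∈
        ((nhdsWithin (0:ℝ) (Set.Ioi 0)) ×ˢ (nhds h)) :=
      Filter.prod_mem_prod (Ioo_mem_nhdsGT_of_mem ⟨le_refl 0, by positivity⟩)
        (Metric.ball_mem_nhds _ one_pos)
    filter_upwards [hmemS] with q hq
    obtain ⟨hq1, hq2⟩ := hq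
    rw [hΔcoe, EReal.coe_le_coe_iff]
    obtain ⟨hs0, hsδ⟩ := hq1
    have hu2 : ‖q.2‖ < 2 := by
      have h1 : ‖q.2 - h‖ < 1 := by rw [← dist_eq_norm]; exact hq2
      calc ‖q.2‖ = ‖h + (q.2 - h)‖ := by rw [add_sub_cancel]
      _ ≤ ‖h‖ + ‖q.2 - h‖ := norm_add_le _ _
      _ < 1 + 1 := by rw [hh]; linarith
      _ = 2 := by norm_num
    have hyb : (x₀ + q.1 • q.2) ∈ Metric.ball x₀ δ₀ := by
      rw [Metric.mem_ball, dist_eq_norm, add_sub_cancel_left, norm_smul, Real.norm_eq_abs,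
        abs_of_pos hs0]
      nlinarith
    have hφy := hφball _ hyb
    rw [add_sub_cancel_left, norm_smul, Real.norm_eq_abs, abs_of_pos hs0] at hφy
    rw [hΔdef]
    dsimp only
    have e : (2/q.1^2) * (-(σ₀/2 * (q.1*‖q.2‖)^2)) ≤ (2/q.1^2) * (φ (x₀ + q.1 • q.2) - φ x₀) := by
      apply mul_le_mul_of_nonneg_left (by nlinarith) (by positivity)
    have e2 : (2/q.1^2) * (-(σ₀/2 * (q.1*‖q.2‖)^2)) = -(σ₀ * ‖q.2‖^2) := by
      field_simp
    rw [e2] at e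
    have h4 : ‖q.2‖^2 ≤ 4 := by nlinarith [norm_nonneg q.2]
    have h5 : σ₀ * ‖q.2‖^2 ≤ σ₀ * 4 := mul_le_mul_of_nonneg_left h4 hσ₀.le
    linarith
  have hsDnebot : sD ≠ ⊥ := fun hb => by rw [hb] at hlb; exact (EReal.coe_ne_bot _) (le_bot_iff.mp hlb)
  -- global quadratic upper bound at x₀ (since 0 ∈ ∂_p f(x₀))
  have hp0' : (0:H) ∈ proxSubdiff f x₀ := ⟨σ₀, hσ₀, δ₀, hδ₀, hball₀⟩
  have hA : ∀ n, Δ (t n) (vs n) ≤ ‖vs n‖^2 / lam := by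
    intro n
    have hk := hkey x₀ 0 hp0' (x₀ + t n • vs n)
    rw [inner_zero_left, add_sub_cancel_left, norm_smul, Real.norm_eq_abs,
      abs_of_pos (htpos n)] at hk
    rw [hΔdef]
    dsimp only
    have e : (2/(t n)^2) * (φ (x₀ + t n • vs n) - φ x₀)
        ≤ (2/(t n)^2) * (1/(2*lam) * (t n * ‖vs n‖)^2) := by
      apply mul_le_mul_of_nonneg_left (by nlinarith) (by positivity)
    have e2 : (2/(t n)^2) * (1/(2*lam) * (t n * ‖vs n‖)^2) = ‖vs n‖^2/lam := by
      have := (htpos n).ne'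
      field_simp
    linarith
  -- parameters
  set η := min 1 (lam * β / 2) with hηdef
  have hη0 : 0 < η := lt_min one_pos (by positivity)
  have hη1 : η ≤ 1 := min_le_left _ _
  have hηlam : η ≤ lam * β / 2 := min_le_right _ _
  -- K1 : subgradient inequality at the base points
  have hK1 : ∀ n, Δ (t n) (vs n + η • h) ≤ Δ (t n) (vs n)
      + 2 * η * (inner ℝ (zn n) h : ℝ) + η^2 / lam := by
    intro n
    have hz := hmem n
    rw [zero_add] at hz
    have hk := hkey _ _ hz (x₀ + t n • (vs n + η • h))
    have hdiff : (x₀ + t n • (vs n + η • h)) - (x₀ + t n • vs n) = (t n * η) • h := by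
      module
    rw [hdiff, real_inner_smul_left, real_inner_smul_right, norm_smul, Real.norm_eq_abs,
      abs_of_pos (mul_pos (htpos n) hη0), hh] at hk
    rw [hΔdef]
    dsimp only
    have hk' : φ (x₀ + t n • (vs n + η • h)) - φ x₀ ≤ (φ (x₀ + t n • vs n) - φ x₀)
        + (t n)^2 * η * (inner ℝ (zn n) h : ℝ) + 1/(2*lam) * (t n)^2 * η^2 := by nlinarith [hk]
    have e := mul_le_mul_of_nonneg_left hk' (by positivity : (0:ℝ) ≤ 2/(t n)^2)
    have e2 : (2/(t n)^2) * ((φ (x₀ + t n • vs n) - φ x₀)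
        + (t n)^2 * η * (inner ℝ (zn n) h : ℝ) + 1/(2*lam) * (t n)^2 * η^2)
        = (2/(t n)^2) * (φ (x₀ + t n • vs n) - φ x₀)
          + 2*η*(inner ℝ (zn n) h : ℝ) + η^2/lam := by
      have := (htpos n).ne'
      field_simp
    rw [e2] at e
    linarith
  -- K2 : scaling identity
  have hK2 : ∀ n, Δ (t n) (vs n + η • h)
      = (1+η)^2 * Δ ((1+η) * t n) ((1+η)⁻¹ • (vs n + η • h)) := by
    intro n
    exact hscale (1+η) (t n) (by linarith) (htpos n) _
  -- tendsto facts
  have hw2 : Tendsto (fun n => (1+η)⁻¹ • (vs n + η • h)) atTop (nhds h) := by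
    have h1 : Tendsto (fun n => vs n + η • h) atTop (nhds (h + η • h)) :=
      hhn.add tendsto_const_nhds
    have h2 := h1.const_smul ((1+η)⁻¹)
    have h3 : (1+η)⁻¹ • (h + η • h) = h := by
      rw [show h + η • h = (1+η) • h by module, inv_smul_smul₀ (by linarith : (1:ℝ)+η ≠ 0)]
    rwa [h3] at h2
  have ht0' : Tendsto (fun n => (1+η) * t n) atTop (nhds 0) := by
    have := ht0.const_mul (1+η)
    simpa using this
  have htpos' : ∀ᶠ n in atTop, 0 < (1+η) * t n :=
    Filter.Eventually.of_forall (fun n => by have := htpos n; positivity)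
  -- big case split
  by_cases hTop : sD = ⊤
  · exfalso
    set M := max (2*η*(inner ℝ z h : ℝ) + 4/lam + η^2/lam + 1) 0 with hM
    have hlt : ((M:ℝ) : EReal) < sD := by rw [hTop]; exact EReal.coe_lt_top _
    have hev1 := hseq (fun n => (1+η) * t n) (fun n => (1+η)⁻¹ • (vs n + η • h))
      htpos' ht0' hw2 M hlt
    have hev2 : ∀ᶠ n in atTop, ‖vs n‖ ≤ 2 := by
      have := hhn.norm.eventually_lt_const (show ‖h‖ < 2 by rw [hh]; norm_num)
      filter_upwards [this] with n hn2 using hn2.le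
    have hfinal : ∀ᶠ n in atTop,
        2*η*(inner ℝ z h : ℝ) + 1 ≤ 2*η*(inner ℝ (zn n) h : ℝ) := by
      filter_upwards [hev1, hev2] with n h1 h2
      have hKn := hK1 n
      rw [hK2 n] at hKn
      have hMle : M ≤ (1+η)^2 * Δ ((1+η) * t n) ((1+η)⁻¹ • (vs n + η • h)) := by
        nlinarith [le_max_right (2*η*(inner ℝ z h : ℝ) + 4/lam + η^2/lam + 1) 0, h1, sq_nonneg η]
      have hAn := hA n
      have hA4 : Δ (t n) (vs n) ≤ 4 / lam := by
        have : ‖vs n‖^2 ≤ 4 := by nlinarith [norm_nonneg (vs n)]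
        calc Δ (t n) (vs n) ≤ ‖vs n‖^2 / lam := hAn
        _ ≤ 4 / lam := by
            exact (div_le_div_iff_of_pos_right hlam).mpr this
      have hMM : 2*η*(inner ℝ z h : ℝ) + 4/lam + η^2/lam + 1 ≤ M := le_max_left _ _
      linarith
    have hlim : Tendsto (fun n => 2*η*(inner ℝ (zn n) h : ℝ)) atTop (nhds (2*η*(inner ℝ z h : ℝ))) :=
      (hzn h).const_mul _
    have := ge_of_tendsto hlim hfinal
    linarith
  · -- real case
    set m := sD.toReal with hmdef
    have hsDm : sD = ((m:ℝ) : EReal) := (EReal.coe_toReal hTop hsDnebot).symm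
    have hβm : β ≤ m := by rw [hsDm] at hβsD; exact_mod_cast hβsD
    have hm0 : 0 < m := lt_of_lt_of_le hβ hβm
    set ε := η * β / 32 with hεdef
    have hε0 : 0 < ε := by positivity
    obtain ⟨g, hgbot, -, hg⟩ := hted
    -- g h ≤ m
    have hgh : g h ≤ ((m:ℝ) : EReal) := by
      have hex : ∀ k : ℕ, ∃ q : ℝ × H,
          (q.1 ∈ Set.Ioo (0:ℝ) (1/(k+1)) ∧ q.2 ∈ Metric.ball h (1/(k+1))) ∧
          Delta2 f x₀ 0 q.1 q.2 < ((m + 1/(k+1) : ℝ) : EReal) := by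
        intro k
        have hk1 : (0:ℝ) < 1/((k:ℝ)+1) := by positivity
        have hfreq : ∃ᶠ p in ((nhdsWithin (0:ℝ) (Set.Ioi 0)) ×ˢ (nhds h)),
            Delta2 f x₀ 0 p.1 p.2 < ((m + 1/(k+1) : ℝ) : EReal) := by
          by_contra hcf
          rw [Filter.not_frequently] at hcf
          have hle : ((m + 1/(k+1) : ℝ) : EReal) ≤ sD := by
            rw [hsDdef, secondDini]
            refine Filter.le_liminf_of_le (by isBoundedDefault) ?_
            filter_upwards [hcf] with p hp
            exact not_lt.mp hp
          rw [hsDm] at hle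
          have h2 := EReal.coe_le_coe_iff.mp hle
          linarith
        have hS : (Set.Ioo (0:ℝ) (1/(k+1)) ×ˢ Metric.ball h (1/(k+1))) ∈
            ((nhdsWithin (0:ℝ) (Set.Ioi 0)) ×ˢ (nhds h)) :=
          Filter.prod_mem_prod (Ioo_mem_nhdsGT_of_mem ⟨le_refl 0, hk1⟩)
            (Metric.ball_mem_nhds _ hk1)
        obtain ⟨p, hp1, hp2⟩ :=
          (hfreq.and_eventually (Filter.eventually_of_mem hS (fun p hp => hp))).exists
        exact ⟨p, hp2, hp1⟩
      choose q hqS hqval using hex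
      have hτpos : ∀ k, 0 < (q k).1 := fun k => (hqS k).1.1
      have hτ0 : Tendsto (fun k => (q k).1) atTop (nhds 0) := by
        apply squeeze_zero (fun k => (hτpos k).le) (fun k => ((hqS k).1.2).le)
        exact tendsto_one_div_add_atTop_nhds_zero_nat
      obtain ⟨hstrong, -⟩ := hg (fun k => (q k).1) hτpos hτ0
      have hmemepi : (h, m) ∈ epiE g := by
        rw [hstrong]
        refine ⟨fun k => ((q k).2, m + 1/(k+1)), fun k => le_of_lt (hqval k), ?_⟩
        apply Filter.Tendsto.prodMk_nhds
        · rw [tendsto_iff_dist_tendsto_zero]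
          apply squeeze_zero (fun k => dist_nonneg)
            (fun k => (Metric.mem_ball.mp ((hqS k).2)).le)
          exact tendsto_one_div_add_atTop_nhds_zero_nat
        · simpa using
            (tendsto_const_nhds (x := m) (f := atTop)).add tendsto_one_div_add_atTop_nhds_zero_nat
      exact hmemepi
    -- recovery sequence along t
    have hepi : (h, m + ε) ∈ epiE g := by
      show g h ≤ ((m + ε : ℝ) : EReal)
      exact le_trans hgh (by exact_mod_cast (by linarith : m ≤ m + ε))
    obtain ⟨hstrongT, -⟩ := hg t htpos ht0
    rw [hstrongT] at hepi
    obtain ⟨u, humem, hulim⟩ := hepi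
    set v : ℕ → H := fun n => (u n).1 with hvdef
    set r : ℕ → ℝ := fun n => (u n).2 with hrdef
    have hv : Tendsto v atTop (nhds h) := (continuous_fst.tendsto _).comp hulim
    have hr : Tendsto r atTop (nhds (m + ε)) := (continuous_snd.tendsto _).comp hulim
    have hvr : ∀ n, Δ (t n) (v n) ≤ r n := by
      intro n
      have h1 : Delta2 f x₀ 0 (t n) ((u n).1) ≤ (((u n).2 : ℝ) : EReal) := humem n
      rw [hΔcoe] at h1
      exact_mod_cast h1
    -- K3 : concavity upper bound for Δ (t n) (vs n)
    have hK3 : ∀ n, Δ (t n) (vs n) ≤ 2 * Δ (t n) (v n)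
        - Δ (t n) ((2:ℝ) • (v n) - vs n) + 2/lam * ‖vs n - v n‖^2 := by
      intro n
      have hmid := midpt φ lam hlam hcreal (x₀ + t n • vs n)
        (x₀ + t n • ((2:ℝ) • (v n) - vs n))
      have hpt : (1/2:ℝ) • (x₀ + t n • vs n)
          + (1/2:ℝ) • (x₀ + t n • ((2:ℝ) • (v n) - vs n)) = x₀ + t n • (v n) := by
        module
      rw [hpt] at hmid
      have hdiff : (x₀ + t n • vs n) - (x₀ + t n • ((2:ℝ) • (v n) - vs n))
          = (2 * t n) • (vs n - v n) := by module
      rw [hdiff, norm_smul, Real.norm_eq_abs,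
        abs_of_pos (by have := htpos n; positivity : (0:ℝ) < 2 * t n)] at hmid
      rw [hΔdef]
      dsimp only
      have hmid' : (1/2) * (φ (x₀ + t n • vs n) - φ x₀)
          + (1/2) * (φ (x₀ + t n • ((2:ℝ) • (v n) - vs n)) - φ x₀)
          - (t n)^2 * ‖vs n - v n‖^2/(2*lam) ≤ φ (x₀ + t n • (v n)) - φ x₀ := by
        have e5 : 1/(8*lam) * ((2*t n)*‖vs n - v n‖)^2
            = (t n)^2*‖vs n - v n‖^2/(2*lam) := by
          field_simp
          ring
        linarith [hmid, e5]
      have e := mul_le_mul_of_nonneg_left hmid' (by positivity : (0:ℝ) ≤ 4/(t n)^2)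
      have e2 : (4/(t n)^2) * ((1/2) * (φ (x₀ + t n • vs n) - φ x₀)
          + (1/2) * (φ (x₀ + t n • ((2:ℝ) • (v n) - vs n)) - φ x₀)
          - (t n)^2 * ‖vs n - v n‖^2/(2*lam))
          = (2/(t n)^2) * (φ (x₀ + t n • vs n) - φ x₀)
            + (2/(t n)^2) * (φ (x₀ + t n • ((2:ℝ) • (v n) - vs n)) - φ x₀)
            - 2/lam * ‖vs n - v n‖^2 := by
        have := (htpos n).ne'
        field_simp
        ring
      have e3 : (4/(t n)^2) * (φ (x₀ + t n • (v n)) - φ x₀)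
          = 2 * ((2/(t n)^2) * (φ (x₀ + t n • (v n)) - φ x₀)) := by ring
      rw [e2, e3] at e
      linarith
    -- eventual bounds
    have ev1 : ∀ᶠ n in atTop, Δ (t n) (v n) ≤ m + 2*ε := by
      have := hr.eventually_lt_const (show m + ε < m + 2*ε by linarith)
      filter_upwards [this] with n h1 using le_trans (hvr n) h1.le
    have ev2 : ∀ᶠ n in atTop, m - ε < Δ (t n) ((2:ℝ) • (v n) - vs n) := by
      apply hseq t (fun n => (2:ℝ) • (v n) - vs n) (Filter.Eventually.of_forall htpos) ht0
      · have h1 : Tendsto (fun n => (2:ℝ) • (v n) - vs n) atTop (nhds ((2:ℝ) • h - h)) :=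
          (hv.const_smul (2:ℝ)).sub hhn
        have h2 : (2:ℝ) • h - h = h := by module
        rwa [h2] at h1
      · rw [hsDm]; exact_mod_cast (by linarith : m - ε < m)
    have ev3 : ∀ᶠ n in atTop, 2/lam * ‖vs n - v n‖^2 ≤ ε := by
      have h1 : Tendsto (fun n => 2/lam * ‖vs n - v n‖^2) atTop (nhds 0) := by
        have h2 : Tendsto (fun n => vs n - v n) atTop (nhds (h - h)) := hhn.sub hv
        rw [sub_self] at h2
        have h3 := (h2.norm.pow 2).const_mul (2/lam)
        simpa using h3
      have := h1.eventually_lt_const hε0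
      filter_upwards [this] with n h2 using h2.le
    have ev4 : ∀ᶠ n in atTop, (1+η)^2 * (m - ε) ≤ Δ (t n) (vs n + η • h) := by
      have hev := hseq (fun n => (1+η) * t n) (fun n => (1+η)⁻¹ • (vs n + η • h))
        htpos' ht0' hw2 (m - ε) (by rw [hsDm]; exact_mod_cast (by linarith : m - ε < m))
      filter_upwards [hev] with n h1
      rw [hK2 n]
      nlinarith [h1, sq_nonneg η]
    have hfinal : ∀ᶠ n in atTop,
        (1+η)^2 * (m - ε) - (m + 6*ε) - η^2/lam ≤ 2*η*(inner ℝ (zn n) h : ℝ) := by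
      filter_upwards [ev1, ev2, ev3, ev4] with n h1 h2 h3 h4
      have hKn := hK1 n
      have hK3n := hK3 n
      linarith
    have hlim : Tendsto (fun n => 2*η*(inner ℝ (zn n) h : ℝ)) atTop (nhds (2*η*(inner ℝ z h : ℝ))) :=
      (hzn h).const_mul _
    have hzlb := ge_of_tendsto hlim hfinal
    -- final arithmetic
    have hq : η^2/lam ≤ η*β/2 := by
      rw [div_le_iff₀ hlam]
      nlinarith [mul_le_mul_of_nonneg_left hηlam hη0.le]
    have hc0 : η*β ≤ (1+η)^2 * (m - ε) - (m + 6*ε) - η^2/lam := by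
      nlinarith [mul_le_mul_of_nonneg_left hβm hη0.le, mul_pos (mul_pos hη0 hη0) hm0,
        hε0, hη1, hη0, hβ, hm0]
    nlinarith [hzlb, hc0, hη0, hβ]
end
end

section
/- Let H be a real Hilbert space, T a closed convex cone in H × H, T(h) := {z ∈ H : (h, z) ∈ T}, and N := T° the dual cone of T in H × H. If there exists β > 0 such that ⟨h, z⟩ ≤ −β for all (h, z) ∈ N with ‖z‖ = 1, then there exists β₁ > 0 such that for every unit vector h ∈ H with h ∈ sqri(Proj_h T) there exists z ∈ T(h) with ⟨h, z⟩ ≥ β₁. -/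
open Filter Topology Set Pointwise

noncomputable section

variable {H : Type*} [NormedAddCommGroup H] [InnerProductSpace ℝ H] [CompleteSpace H]

set_option maxHeartbeats 1600000 in
theorem dual_cone_duality_i_to_ii (T : Set (H × H)) (hTclosed : IsClosed T)
    (hTconv : Convex ℝ T) (hTcone : ∀ c : ℝ, 0 ≤ c → ∀ q ∈ T, c • q ∈ T)
    (hyp : ∃ β > (0:ℝ), ∀ q ∈ dualConePair T, ‖q.2‖ = 1 → (inner ℝ q.1 q.2 : ℝ) ≤ -β) :
    ∃ β₁ > (0:ℝ), ∀ h : H, ‖h‖ = 1 → h ∈ sqri (Prod.fst '' T) →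
      ∃ z : H, (h, z) ∈ T ∧ β₁ ≤ (inner ℝ h z : ℝ) := by
  obtain ⟨β, hβ, hdual⟩ := hyp
  refine ⟨β/8, by positivity, ?_⟩
  intro h hh hsq
  obtain ⟨hhP, S, hScl, hScone⟩ := hsq
  obtain ⟨p₀, hp₀T, hp₀⟩ := hhP
  have hz₀T : (h, p₀.2) ∈ T := by
    have hpe : (h, p₀.2) = p₀ := by rw [← hp₀]
    rwa [hpe]
  set z₀ := p₀.2 with hz₀def
  have hT0 : (0 : H × H) ∈ T := by simpa using hTcone 0 le_rfl _ hz₀T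
  have haddT : ∀ {p q : H × H}, p ∈ T → q ∈ T → p + q ∈ T := by
    intro p q hp hq
    have hcm := hTcone 2 (by norm_num) _
      (hTconv hp hq (by norm_num : (0:ℝ) ≤ 1/2) (by norm_num : (0:ℝ) ≤ 1/2) (by norm_num))
    have h2 : ((2:ℝ)) • ((1/2:ℝ) • p + (1/2:ℝ) • q) = p + q := by
      rw [smul_add, smul_smul, smul_smul]
      norm_num
    rwa [h2] at hcm
  -- Step 1: (h, β/2) is in the closure of the auxiliary cone M
  have hnear : ∀ ε > (0:ℝ), ∃ h' z : H, (h', z) ∈ T ∧ ‖h' - h‖ < ε ∧ β/2 - ε < (inner ℝ h z : ℝ) := by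
    set M : Set (H × ℝ) := {q | ∃ z, (q.1, z) ∈ T ∧ q.2 ≤ (inner ℝ h z : ℝ)} with hM
    have hMconv : Convex ℝ M := by
      rintro ⟨x₁, t₁⟩ ⟨z₁, hz₁, ht₁⟩ ⟨x₂, t₂⟩ ⟨z₂, hz₂, ht₂⟩ a b ha hb hab
      refine ⟨a • z₁ + b • z₂, ?_, ?_⟩
      · have := hTconv hz₁ hz₂ ha hb hab
        simpa using this
      · simp only [Prod.smul_mk, Prod.mk_add_mk, smul_eq_mul]
        rw [inner_add_right, real_inner_smul_right, real_inner_smul_right]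
        nlinarith [mul_le_mul_of_nonneg_left ht₁ ha, mul_le_mul_of_nonneg_left ht₂ hb]
    have hMcone : ∀ c : ℝ, 0 ≤ c → ∀ q ∈ M, c • q ∈ M := by
      rintro c hc ⟨x, t⟩ ⟨z, hz, ht⟩
      refine ⟨c • z, by simpa using hTcone c hc _ hz, ?_⟩
      simp only [Prod.smul_mk, smul_eq_mul]
      rw [real_inner_smul_right]
      exact mul_le_mul_of_nonneg_left ht hc
    have hMmem : ((h, β/2) : H × ℝ) ∈ closure M := by
      by_contra hc
      obtain ⟨f, u, hfu, hux⟩ :=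
        geometric_hahn_banach_closed_point hMconv.closure isClosed_closure hc
      set u₀ : H := (InnerProductSpace.toDual ℝ H).symm
        (f.comp (ContinuousLinearMap.inl ℝ H ℝ)) with hu₀def
      have hu₀ : ∀ x : H, (inner ℝ u₀ x : ℝ) = f (x, 0) := by
        intro x
        rw [hu₀def, InnerProductSpace.toDual_symm_apply]
        rfl
      set r : ℝ := f (0, 1) with hrdef
      have hf_eq : ∀ (x : H) (t : ℝ), f (x, t) = (inner ℝ u₀ x : ℝ) + t * r := by
        intro x t
        have hxt : ((x, t) : H × ℝ) = (x, (0:ℝ)) + t • ((0:H), (1:ℝ)) := by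
          simp [Prod.ext_iff]
        rw [hxt, map_add, map_smul, hu₀, smul_eq_mul, hrdef]
    -- u > 0
      have hu_pos : 0 < u := by
        have h0 : ((0, 0) : H × ℝ) ∈ M := ⟨0, by simpa [Prod.mk_zero_zero] using hT0, by simp⟩
        have := hfu _ (subset_closure h0)
        simpa [Prod.mk_zero_zero] using this
      have hM0 : ∀ q ∈ M, f q ≤ 0 := by
        intro q hq
        by_contra hq0
        push_neg at hq0
        have hc' : (0:ℝ) < (u + 1) / f q := div_pos (by linarith) hq0
        have hmem := hMcone _ hc'.le _ hq
        have := hfu _ (subset_closure hmem)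
        rw [map_smul, smul_eq_mul, div_mul_cancel₀ _ (ne_of_gt hq0)] at this
        linarith
      have hr : 0 ≤ r := by
        have hmem : ((0, -1) : H × ℝ) ∈ M := ⟨0, by simpa [Prod.mk_zero_zero] using hT0, by simp⟩
        have := hM0 _ hmem
        rw [hf_eq] at this
        simp at this
        linarith
      rcases eq_or_lt_of_le hr with heq | hrpos
      · have h1 : u < (inner ℝ u₀ h : ℝ) := by
          have := hux
          rw [hf_eq, ← heq] at this
          linarith
        have h2 : ((h, (inner ℝ h z₀ : ℝ)) : H × ℝ) ∈ M := ⟨z₀, hz₀T, le_rfl⟩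
        have := hM0 _ h2
        rw [hf_eq, ← heq] at this
        simp at this
        linarith
      · have hq : ((r⁻¹ • u₀, h) : H × H) ∈ dualConePair T := by
          intro w hw
          have hmem : ((w.1, (inner ℝ h w.2 : ℝ)) : H × ℝ) ∈ M := ⟨w.2, by simpa using hw, le_rfl⟩
          have h3 := hM0 _ hmem
          rw [hf_eq] at h3
          simp only [real_inner_smul_left]
          have h4 : r⁻¹ * (inner ℝ u₀ w.1 : ℝ) + (inner ℝ h w.2 : ℝ)
              = r⁻¹ * ((inner ℝ u₀ w.1 : ℝ) + (inner ℝ h w.2 : ℝ) * r) := by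
            field_simp
          rw [h4]
          exact mul_nonpos_of_nonneg_of_nonpos (inv_nonneg.2 hr) h3
        have h5 := hdual _ hq (by simpa using hh)
        simp only [real_inner_smul_left] at h5
        have h6 := hux
        rw [hf_eq] at h6
        have h7 : (inner ℝ u₀ h : ℝ) ≤ -β * r := by
          have := mul_le_mul_of_nonneg_left h5 hrpos.le
          rw [← mul_assoc, mul_inv_cancel₀ hrpos.ne', one_mul] at this
          linarith
        nlinarith [hu_pos]
    intro ε hε
    obtain ⟨b, hbM, hdist⟩ := Metric.mem_closure_iff.mp hMmem ε hε
    obtain ⟨z, hzT, htz⟩ := hbM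
    rw [Prod.dist_eq, sup_lt_iff] at hdist
    refine ⟨b.1, z, hzT, ?_, ?_⟩
    · rw [dist_eq_norm] at hdist
      rw [norm_sub_rev]
      exact hdist.1
    · have := hdist.2
      rw [Real.dist_eq, abs_lt] at this
      linarith
  -- Step 2: Robinson–Ursescu style openness via Baire category
  obtain ⟨ρ₀, hρ₀, K, hK, horacle⟩ :
      ∃ ρ₀ > (0:ℝ), ∃ K > (0:ℝ), ∀ x : H, x ∈ S → ‖x‖ ≤ ρ₀ →
        ∃ w : H, ‖w‖ ≤ K ∧ (h + x, w) ∈ T := by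
    haveI : CompleteSpace S := hScl.completeSpace_coe
    haveI : BaireSpace S := BaireSpace.of_completelyPseudoMetrizable
    set A : ℝ → Set S := fun K => {s : S | ∃ z : H, ‖z‖ ≤ K ∧ (h + (s:H), z) ∈ T} with hA
    -- covering lemma
    have hcov : ∀ s : S, ∃ m : ℕ, ((m:ℝ)+1)⁻¹ • s ∈ A ((m:ℝ)+1) := by
      intro s
      have hs : (s:H) ∈ coneGen (Prod.fst '' T) h := by rw [hScone]; exact s.2
      obtain ⟨t, ht, a, haP, hseq⟩ := hs
      obtain ⟨pa, hpaT, hpa⟩ := haP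
      obtain ⟨m, hm⟩ := exists_nat_ge (max t (‖z₀‖ + ‖pa.2‖))
      have hmt : t ≤ (m:ℝ)+1 := le_trans (le_max_left _ _) (by linarith)
      have hmz : ‖z₀‖ + ‖pa.2‖ ≤ (m:ℝ)+1 := le_trans (le_max_right _ _) (by linarith)
      have hm1 : (0:ℝ) < (m:ℝ)+1 := by positivity
      set lam : ℝ := t / ((m:ℝ)+1) with hlam
      have hl0 : 0 ≤ lam := div_nonneg ht hm1.le
      have hl1 : lam ≤ 1 := by rw [hlam, div_le_one hm1]; exact hmt
      refine ⟨m, (1-lam) • z₀ + lam • pa.2, ?_, ?_⟩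
      · have := norm_add_le ((1-lam) • z₀) (lam • pa.2)
        rw [norm_smul, norm_smul, Real.norm_eq_abs, Real.norm_eq_abs,
          abs_of_nonneg (by linarith), abs_of_nonneg hl0] at this
        nlinarith [norm_nonneg z₀, norm_nonneg pa.2]
      · have hcomb := hTconv hz₀T hpaT (by linarith : (0:ℝ) ≤ 1 - lam) hl0 (by ring)
        have heq : (1-lam) • ((h, z₀) : H × H) + lam • pa
            = (h + ((((m:ℝ)+1)⁻¹ • s : S):H), (1-lam) • z₀ + lam • pa.2) := by
          have h1 : ((((m:ℝ)+1)⁻¹ • s : S):H) = ((m:ℝ)+1)⁻¹ • (s:H) := rfl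
          rw [h1, hseq, ← hpa]
          ext
          · simp only [Prod.fst_add, Prod.smul_fst]
            rw [smul_smul]
            have : ((m:ℝ)+1)⁻¹ * t = lam := by rw [hlam]; ring
            rw [this, smul_sub]
            module
          · simp
        rwa [heq] at hcomb
    -- Baire category
    have hUnion : (⋃ m : ℕ, closure {s : S | ((m:ℝ)+1)⁻¹ • s ∈ A ((m:ℝ)+1)}) = univ := by
      apply eq_univ_of_forall
      intro s
      obtain ⟨m, hm⟩ := hcov s
      exact mem_iUnion.2 ⟨m, subset_closure hm⟩
    obtain ⟨N, hN⟩ := nonempty_interior_of_iUnion_of_closed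
      (fun m : ℕ => isClosed_closure) hUnion
    obtain ⟨s₀, hs₀⟩ := hN
    obtain ⟨ρ, hρ, hball⟩ := Metric.mem_nhds_iff.mp (mem_interior_iff_mem_nhds.mp hs₀)
    have hN1 : (0:ℝ) < (N:ℝ)+1 := by positivity
    set c : S := ((N:ℝ)+1)⁻¹ • s₀ with hcdef
    set ρ' : ℝ := ((N:ℝ)+1)⁻¹ * ρ with hρ'def
    have hρ'pos : 0 < ρ' := by positivity
    have hball' : ∀ s : S, dist s c < ρ' → s ∈ closure (A ((N:ℝ)+1)) := by
      intro s hs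
      have h1 : ((N:ℝ)+1) • s ∈ Metric.ball s₀ ρ := by
        rw [Metric.mem_ball, dist_eq_norm]
        have : ((N:ℝ)+1) • s - s₀ = ((N:ℝ)+1) • (s - c) := by
          rw [smul_sub, hcdef, smul_smul, mul_inv_cancel₀ hN1.ne', one_smul]
        rw [this, norm_smul, Real.norm_eq_abs, abs_of_pos hN1]
        rw [dist_eq_norm] at hs
        calc ((N:ℝ)+1) * ‖s - c‖ < ((N:ℝ)+1) * ρ' := by
              exact mul_lt_mul_of_pos_left hs hN1
          _ = ρ := by rw [hρ'def, ← mul_assoc, mul_inv_cancel₀ hN1.ne', one_mul]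
      obtain ⟨x, hx, hlim⟩ := mem_closure_iff_seq_limit.mp (hball h1)
      have hlim' : Tendsto (fun k => ((N:ℝ)+1)⁻¹ • x k) atTop (𝓝 s) := by
        have := hlim.const_smul (((N:ℝ)+1)⁻¹)
        rwa [smul_smul, inv_mul_cancel₀ hN1.ne', one_smul] at this
      exact mem_closure_of_tendsto hlim' (Eventually.of_forall (fun k => hx k))
    -- symmetrize
    obtain ⟨m₁, hm₁⟩ := hcov (-c)
    have hm₁1 : (0:ℝ) < (m₁:ℝ)+1 := by positivity
    set μ' : ℝ := ((m₁:ℝ)+1)⁻¹ with hμ'def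
    have hμ'pos : 0 < μ' := by positivity
    set θ : ℝ := μ' / (1 + μ') with hθdef
    have hθ0 : 0 < θ := by positivity
    have hθ1 : θ < 1 := by rw [hθdef, div_lt_one (by positivity)]; linarith
    have hθeq : (1 - θ) * μ' = θ := by rw [hθdef]; field_simp; ring
    obtain ⟨z₁, hz₁n, hz₁T⟩ := hm₁
    set K : ℝ := max ((N:ℝ)+1) ((m₁:ℝ)+1) with hKdef
    have hKpos : 0 < K := lt_of_lt_of_le hN1 (le_max_left _ _)
    set ρ₁ : ℝ := θ * ρ' with hρ₁def
    have hρ₁pos : 0 < ρ₁ := by positivity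
    have hballK : ∀ v : S, ‖v‖ < ρ₁ → v ∈ closure (A K) := by
      intro v hv
      set s' : S := θ⁻¹ • v with hs'def
      have hs'X : dist (c + s') c < ρ' := by
        rw [dist_eq_norm, add_sub_cancel_left, hs'def, norm_smul, Real.norm_eq_abs,
          abs_of_pos (inv_pos.2 hθ0)]
        rw [hρ₁def] at hv
        calc θ⁻¹ * ‖v‖ < θ⁻¹ * (θ * ρ') := by
              exact mul_lt_mul_of_pos_left hv (inv_pos.2 hθ0)
          _ = ρ' := by rw [← mul_assoc, inv_mul_cancel₀ hθ0.ne', one_mul]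
      obtain ⟨x, hx, hlim⟩ := mem_closure_iff_seq_limit.mp (hball' _ hs'X)
      have h2 : Tendsto (fun k => θ • x k + (1-θ) • (μ' • (-c))) atTop
          (𝓝 (θ • (c + s') + (1-θ) • (μ' • (-c)))) :=
        ((hlim.const_smul θ).add tendsto_const_nhds)
      have h3 : θ • (c + s') + (1-θ) • (μ' • (-c)) = v := by
        rw [hs'def, smul_add, smul_smul θ θ⁻¹, mul_inv_cancel₀ hθ0.ne', one_smul,
          smul_smul (1-θ) μ', hθeq]
        module
      rw [h3] at h2
      refine mem_closure_of_tendsto h2 (Eventually.of_forall ?_)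
      intro k
      obtain ⟨z, hzn, hzT⟩ := hx k
      refine ⟨θ • z + (1-θ) • z₁, ?_, ?_⟩
      · have := norm_add_le (θ • z) ((1-θ) • z₁)
        rw [norm_smul, norm_smul, Real.norm_eq_abs, Real.norm_eq_abs,
          abs_of_pos hθ0, abs_of_nonneg (by linarith)] at this
        have hb1 : θ * ‖z‖ ≤ θ * K :=
          mul_le_mul_of_nonneg_left (hzn.trans (le_max_left _ _)) hθ0.le
        have hb2 : (1-θ) * ‖z₁‖ ≤ (1-θ) * K :=
          mul_le_mul_of_nonneg_left (hz₁n.trans (le_max_right _ _)) (by linarith)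
        have hb3 : θ * K + (1-θ) * K = K := by ring
        linarith
      · have hcomb := hTconv hzT hz₁T hθ0.le (by linarith : (0:ℝ) ≤ 1-θ) (by ring)
        have heq2 : θ • ((h + ((x k : S):H), z) : H × H)
            + (1-θ) • ((h + ((μ' • (-c) : S):H), z₁) : H × H)
            = (h + ((θ • x k + (1-θ) • (μ' • (-c)) : S):H), θ • z + (1-θ) • z₁) := by
          ext
          · push_cast
            simp only [Prod.fst_add, Prod.smul_fst]
            module
          · simp
        rwa [heq2] at hcomb
    -- series argument
    have hseries : ∀ v : S, ‖v‖ < ρ₁ → ∃ w : H, ‖w‖ ≤ 2*K ∧ ((2:ℝ) • h + (v:H), w) ∈ T := by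
      intro v hv
      have hpick : ∀ r : S, ∃ p : S × H, ‖r‖ < ρ₁ →
          (‖r - p.1‖ < ρ₁/2 ∧ ‖p.2‖ ≤ K ∧ (h + ((p.1 : S):H), p.2) ∈ T) := by
        intro r
        by_cases hr : ‖r‖ < ρ₁
        · obtain ⟨b, hb, hdb⟩ := Metric.mem_closure_iff.mp (hballK r hr) (ρ₁/2) (by positivity)
          obtain ⟨z, hz, hzT⟩ := hb
          refine ⟨(b, z), fun _ => ⟨?_, hz, hzT⟩⟩
          rwa [dist_eq_norm] at hdb
        · exact ⟨(0,0), fun h' => absurd h' hr⟩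
      choose pk hpk using hpick
      set u : ℕ → S := fun n => Nat.rec v (fun _ r => (2:ℝ) • (r - (pk r).1)) n with hudef
      have husucc : ∀ n, u (n+1) = (2:ℝ) • (u n - (pk (u n)).1) := fun n => rfl
      have hun : ∀ n, ‖u n‖ < ρ₁ := by
        intro n
        induction n with
        | zero => exact hv
        | succ n ih =>
          rw [husucc, norm_smul, Real.norm_eq_abs]
          have := (hpk (u n) ih).1
          rw [abs_of_pos (by norm_num : (0:ℝ) < 2)]
          linarith
      set σ : ℕ → S := fun n => (pk (u n)).1 with hσdef
      set ζ : ℕ → H := fun n => (pk (u n)).2 with hζdef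
      have hσT : ∀ n, (h + ((σ n : S):H), ζ n) ∈ T := fun n => (hpk _ (hun n)).2.2
      have hζK : ∀ n, ‖ζ n‖ ≤ K := fun n => (hpk _ (hun n)).2.1
      have hps : ∀ k, (∑ j ∈ Finset.range k, ((1:ℝ)/2)^j • σ j) = v - ((1:ℝ)/2)^k • u k := by
        intro k
        induction k with
        | zero => simp [show u 0 = v from rfl]
        | succ k ih =>
          rw [Finset.sum_range_succ, ih, husucc, smul_smul]
          have hc : ((1:ℝ)/2)^(k+1) * 2 = ((1:ℝ)/2)^k := by rw [pow_succ]; ring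
          rw [hc, smul_sub]
          module
      have hsn : Summable (fun j => ‖((1:ℝ)/2)^j • ζ j‖) := by
        apply Summable.of_nonneg_of_le (fun j => norm_nonneg _)
          (fun j => ?_) (summable_geometric_two.mul_right K)
        rw [norm_smul, Real.norm_eq_abs, abs_of_nonneg (by positivity)]
        exact mul_le_mul_of_nonneg_left (hζK j) (by positivity)
      have hsummable : Summable (fun j => ((1:ℝ)/2)^j • ζ j) := hsn.of_norm
      set w : H := ∑' j, ((1:ℝ)/2)^j • ζ j with hwdef
      have hwlim : Tendsto (fun k => ∑ j ∈ Finset.range k, ((1:ℝ)/2)^j • ζ j)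
          atTop (𝓝 w) := hsummable.hasSum.tendsto_sum_nat
      have hwn : ‖w‖ ≤ 2*K := by
        have h1 : ‖w‖ ≤ ∑' j, ‖((1:ℝ)/2)^j • ζ j‖ :=
          norm_tsum_le_tsum_norm hsn
        have h2 : (∑' j : ℕ, ‖((1:ℝ)/2)^j • ζ j‖) ≤ ∑' j : ℕ, ((1:ℝ)/2)^j * K := by
          apply Summable.tsum_le_tsum _ hsn (summable_geometric_two.mul_right K)
          intro j
          rw [norm_smul, Real.norm_eq_abs, abs_of_nonneg (by positivity)]
          exact mul_le_mul_of_nonneg_left (hζK j) (by positivity)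
        have h3 : (∑' j : ℕ, ((1:ℝ)/2)^j * K) = 2*K := by
          rw [tsum_mul_right, tsum_geometric_two]
        linarith
      have hQ : ∀ k, (∑ j ∈ Finset.range k,
          ((1:ℝ)/2)^j • ((h + ((σ j : S):H), ζ j) : H × H)) ∈ T := by
        intro k
        induction k with
        | zero => simpa using hT0
        | succ k ih =>
          rw [Finset.sum_range_succ]
          exact haddT ih (hTcone _ (by positivity) _ (hσT k))
      have hQeq : ∀ k, (∑ j ∈ Finset.range k,
          ((1:ℝ)/2)^j • ((h + ((σ j : S):H), ζ j) : H × H))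
          = ((∑ j ∈ Finset.range k, ((1:ℝ)/2)^j) • h
              + (((∑ j ∈ Finset.range k, ((1:ℝ)/2)^j • σ j : S)):H),
             ∑ j ∈ Finset.range k, ((1:ℝ)/2)^j • ζ j) := by
        intro k
        induction k with
        | zero => simp [Prod.mk_zero_zero]
        | succ k ih =>
          rw [Finset.sum_range_succ, ih]
          ext
          · push_cast [Finset.sum_range_succ]
            simp only [Prod.fst_add, Prod.smul_fst, Prod.mk_add_mk]
            module
          · simp [Finset.sum_range_succ]
      have hQlim : Tendsto (fun k => ∑ j ∈ Finset.range k,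
          ((1:ℝ)/2)^j • ((h + ((σ j : S):H), ζ j) : H × H))
          atTop (𝓝 ((2:ℝ) • h + (v:H), w)) := by
        have hc2 : Tendsto (fun k => (∑ j ∈ Finset.range k, ((1:ℝ)/2)^j) • h)
            atTop (𝓝 ((2:ℝ) • h)) :=
          (hasSum_geometric_two.tendsto_sum_nat).smul_const h
        have hu0 : Tendsto (fun k => ((1:ℝ)/2)^k • ((u k : S):H)) atTop (𝓝 0) := by
          have hg : Tendsto (fun k : ℕ => ((1:ℝ)/2)^k * ρ₁) atTop (𝓝 0) := by
            have := tendsto_pow_atTop_nhds_zero_of_lt_one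
              (by norm_num : (0:ℝ) ≤ 1/2) (by norm_num : (1:ℝ)/2 < 1)
            simpa using this.mul_const ρ₁
          refine squeeze_zero_norm (fun k => ?_) hg
          rw [norm_smul, Real.norm_eq_abs, abs_of_nonneg (by positivity)]
          exact mul_le_mul_of_nonneg_left (le_of_lt (hun k)) (by positivity)
        have hσlim : Tendsto (fun k => (((∑ j ∈ Finset.range k, ((1:ℝ)/2)^j • σ j : S)):H))
            atTop (𝓝 (v:H)) := by
          have hkey : ∀ k, (((∑ j ∈ Finset.range k, ((1:ℝ)/2)^j • σ j : S)):H)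
              = (v:H) - ((1:ℝ)/2)^k • ((u k : S):H) := by
            intro k
            rw [hps k, AddSubgroupClass.coe_sub, SetLike.val_smul]
          have h4 : Tendsto (fun k => (v:H) - ((1:ℝ)/2)^k • ((u k : S):H))
              atTop (𝓝 ((v:H) - 0)) := tendsto_const_nhds.sub hu0
          rw [sub_zero] at h4
          exact h4.congr (fun k => (hkey k).symm)
        have h5 := (hc2.add hσlim).prodMk_nhds hwlim
        exact h5.congr (fun k => (hQeq k).symm)
      exact ⟨w, hwn, hTclosed.mem_of_tendsto hQlim (Eventually.of_forall hQ)⟩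
    -- oracle
    refine ⟨ρ₁/4, by positivity, K, hKpos, ?_⟩
    intro x hxS hx
    have hxn : ‖((2:ℝ) • (⟨x, hxS⟩ : S))‖ < ρ₁ := by
      have h6 : ‖((2:ℝ) • (⟨x, hxS⟩ : S))‖ = 2 * ‖x‖ := by
        rw [norm_smul, Real.norm_eq_abs, abs_of_pos (by norm_num : (0:ℝ) < 2)]
        rfl
      rw [h6]
      linarith
    obtain ⟨w, hw, hwT⟩ := hseries _ hxn
    refine ⟨(1/2 : ℝ) • w, ?_, ?_⟩
    · rw [norm_smul, Real.norm_eq_abs]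
      rw [abs_of_pos (by norm_num : (0:ℝ) < 1/2)]
      linarith
    · have := hTcone (1/2) (by norm_num) _ hwT
      have heq3 : ((1:ℝ)/2) • (((2:ℝ) • h + (((2:ℝ) • (⟨x, hxS⟩ : S) : S) : H), w) : H × H)
          = (h + x, (1/2 : ℝ) • w) := by
        have h7 : (((2:ℝ) • (⟨x, hxS⟩ : S) : S) : H) = (2:ℝ) • x := rfl
        ext
        · simp only [Prod.smul_fst, Prod.fst_add, h7]
          module
        · simp
      rwa [heq3] at this
  -- Step 3: assembly
  set ε : ℝ := min (β/16) (ρ₀ * β / (16*(K+β+1))) with hεdef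
  have hεpos : 0 < ε := lt_min (by positivity) (by positivity)
  have hεβ : ε ≤ β/16 := min_le_left _ _
  obtain ⟨h', z, hz'T, hdist, hval⟩ := hnear ε hεpos
  set μ : ℝ := ε / ρ₀ with hμdef
  have hμpos : 0 < μ := by positivity
  have hμb : μ * (K+β+1) ≤ β/16 := by
    have h1 : ε ≤ ρ₀ * β / (16*(K+β+1)) := min_le_right _ _
    rw [hμdef, div_mul_eq_mul_div, div_le_iff₀ hρ₀]
    calc ε * (K+β+1) ≤ (ρ₀ * β / (16*(K+β+1))) * (K+β+1) :=
          mul_le_mul_of_nonneg_right h1 (by positivity)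
      _ = β/16 * ρ₀ := by field_simp
  have hμK : μ * K ≤ β/16 := by
    nlinarith [mul_nonneg hμpos.le (by positivity : (0:ℝ) ≤ β+1)]
  have hμ1 : μ ≤ 1 := by
    nlinarith [mul_nonneg hμpos.le (by positivity : (0:ℝ) ≤ K+1), hβ, hμb]
  have hS' : h' - h ∈ S := by
    have : h' - h ∈ coneGen (Prod.fst '' T) h :=
      ⟨1, zero_le_one, h', ⟨(h', z), hz'T, rfl⟩, by rw [one_smul]⟩
    rwa [hScone] at this
  set s : H := (ρ₀/ε) • (h - h') with hsdef
  have hsS : s ∈ S := by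
    apply S.smul_mem
    have := S.neg_mem hS'
    simpa using this
  have hsnorm : ‖s‖ ≤ ρ₀ := by
    rw [hsdef, norm_smul, Real.norm_eq_abs, abs_of_pos (by positivity)]
    have hd : ‖h - h'‖ < ε := by rw [norm_sub_rev]; exact hdist
    calc ρ₀/ε * ‖h - h'‖ ≤ ρ₀/ε * ε := mul_le_mul_of_nonneg_left hd.le (by positivity)
      _ = ρ₀ := div_mul_cancel₀ _ hεpos.ne'
  obtain ⟨w, hwK, hwT⟩ := horacle s hsS hsnorm
  have hq1 : ((h', z) + μ • ((h + s, w) : H × H)) ∈ T :=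
    haddT hz'T (hTcone μ hμpos.le _ hwT)
  have hμs : μ • s = h - h' := by
    rw [hsdef, smul_smul]
    have hc : μ * (ρ₀/ε) = 1 := by rw [hμdef]; field_simp
    rw [hc, one_smul]
  have hq2 : ((h', z) + μ • ((h + s, w) : H × H)) = ((1+μ) • h, z + μ • w) := by
    ext
    · simp only [Prod.fst_add, Prod.smul_fst, Prod.mk_add_mk]
      rw [smul_add, hμs]
      module
    · simp
  rw [hq2] at hq1
  have h1μ : (0:ℝ) < 1 + μ := by positivity
  have hfin := hTcone (1+μ)⁻¹ (by positivity) _ hq1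
  have hq3 : ((1+μ)⁻¹) • ((((1+μ) • h, z + μ • w)) : H × H)
      = (h, (1+μ)⁻¹ • (z + μ • w)) := by
    ext
    · simp only [Prod.smul_fst]
      rw [smul_smul, inv_mul_cancel₀ h1μ.ne', one_smul]
    · rfl
  rw [hq3] at hfin
  refine ⟨(1+μ)⁻¹ • (z + μ • w), hfin, ?_⟩
  rw [real_inner_smul_right, inner_add_right, real_inner_smul_right]
  have hw2 : -K ≤ (inner ℝ h w : ℝ) := by
    have hcs := real_inner_le_norm h (-w)
    rw [inner_neg_right, norm_neg, hh, one_mul] at hcs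
    linarith
  have hwmu : -(μ*K) ≤ μ * (inner ℝ h w : ℝ) := by
    have := mul_le_mul_of_nonneg_left hw2 hμpos.le
    linarith [this]
  have hXb : β/8 * (1+μ) ≤ (inner ℝ h z : ℝ) + μ * (inner ℝ h w : ℝ) := by
    nlinarith [hval, hεβ, hμK, hwmu, mul_nonneg hβ.le (sub_nonneg.2 hμ1)]
  calc β/8 = (1+μ)⁻¹ * (β/8 * (1+μ)) := by field_simp
    _ ≤ (1+μ)⁻¹ * ((inner ℝ h z : ℝ) + μ * (inner ℝ h w : ℝ)) :=
        mul_le_mul_of_nonneg_left hXb (by positivity)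
end
end

section
/- Let H be a real Hilbert space, T a closed convex cone in H × H, T(h) := {z ∈ H : (h, z) ∈ T}, and N := T° the dual cone of T in H × H. Assume qri N ≠ ∅ and qri(Proj_z N) ⊆ sqri(Proj_h T). If there exists β₁ > 0 such that for every unit vector h ∈ H with h ∈ sqri(Proj_h T) there exists z ∈ T(h) with ⟨h, z⟩ ≥ β₁, then there exists β > 0 (indeed β = β₁ works) such that ⟨h, z⟩ ≤ −β for all (h, z) ∈ N with ‖z‖ = 1. -/
open Filter Topology Set Pointwise

noncomputable section

variable {H : Type*} [NormedAddCommGroup H] [InnerProductSpace ℝ H] [CompleteSpace H]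

lemma qri_segment {E : Type*} [NormedAddCommGroup E] [NormedSpace ℝ E]
    {A : Set E} (hA : Convex ℝ A) {x y : E} (hx : x ∈ qri A) (hy : y ∈ A)
    {l : ℝ} (hl0 : 0 < l) (hl1 : l ≤ 1) : l • x + (1 - l) • y ∈ qri A := by
  obtain ⟨hxA, S, hS⟩ := hx
  set w := l • x + (1 - l) • y with hwdef
  have hwA : w ∈ A := hA hxA hy hl0.le (by linarith) (by ring)
  refine ⟨hwA, S, ?_⟩
  have h1 : coneGen A x ⊆ coneGen A w := by
    rintro _ ⟨t, ht, a, ha, rfl⟩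
    refine ⟨t / l, div_nonneg ht hl0.le, l • a + (1 - l) • y,
      hA ha hy hl0.le (by linarith) (by ring), ?_⟩
    have heq : l • a + (1 - l) • y - w = l • (a - x) := by
      rw [hwdef]; module
    rw [heq, smul_smul, div_mul_cancel₀ _ hl0.ne']
  have hyx : y - x ∈ (S : Set E) := by
    rw [← hS]; exact subset_closure ⟨1, zero_le_one, y, hy, (one_smul ℝ _).symm⟩
  have h2 : coneGen A w ⊆ (S : Set E) := by
    rintro _ ⟨t, ht, a, ha, rfl⟩
    have hax : a - x ∈ (S : Set E) := by
      rw [← hS]; exact subset_closure ⟨1, zero_le_one, a, ha, (one_smul ℝ _).symm⟩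
    have heq : a - w = (a - x) + (-(1 - l)) • (y - x) := by rw [hwdef]; module
    rw [heq]
    exact S.smul_mem t (S.add_mem hax (S.smul_mem _ hyx))
  apply subset_antisymm
  · have hcl : IsClosed (S : Set E) := hS ▸ isClosed_closure
    exact closure_minimal h2 hcl
  · rw [← hS]; exact closure_mono h1

lemma qri_image {E F : Type*} [NormedAddCommGroup E] [NormedSpace ℝ E]
    [NormedAddCommGroup F] [NormedSpace ℝ F]
    (L : E →L[ℝ] F) {A : Set E} {x : E} (hx : x ∈ qri A) :
    L x ∈ qri (⇑L '' A) := by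
  obtain ⟨hxA, S, hS⟩ := hx
  refine ⟨⟨x, hxA, rfl⟩, (S.map (L : E →ₗ[ℝ] F)).topologicalClosure, ?_⟩
  have himg : coneGen (⇑L '' A) (L x) = ⇑L '' coneGen A x := by
    ext y; constructor
    · rintro ⟨t, ht, _, ⟨a, ha, rfl⟩, rfl⟩
      exact ⟨t • (a - x), ⟨t, ht, a, ha, rfl⟩, by simp [map_smul, map_sub]⟩
    · rintro ⟨_, ⟨t, ht, a, ha, rfl⟩, rfl⟩
      exact ⟨t, ht, L a, ⟨a, ha, rfl⟩, by simp [map_smul, map_sub]⟩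
  rw [himg]
  have h1 : closure (⇑L '' coneGen A x) = closure (⇑L '' (S : Set E)) := by
    apply subset_antisymm
    · exact closure_mono (Set.image_mono (hS ▸ subset_closure))
    · refine closure_minimal ?_ isClosed_closure
      have : ⇑L '' (S : Set E) = ⇑L '' closure (coneGen A x) := by rw [hS]
      rw [this]
      exact image_closure_subset_closure_image L.continuous
  rw [h1, Submodule.topologicalClosure_coe, Submodule.map_coe]
  rfl

lemma sqri_smul_cone {E : Type*} [NormedAddCommGroup E] [NormedSpace ℝ E]
    {A : Set E} (hA : ∀ c : ℝ, 0 < c → ∀ a ∈ A, c • a ∈ A)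
    {x : E} (hx : x ∈ sqri A) {c : ℝ} (hc : 0 < c) : c • x ∈ sqri A := by
  obtain ⟨hxA, S, hScl, hS⟩ := hx
  refine ⟨hA c hc x hxA, S, hScl, ?_⟩
  rw [← hS]
  ext y; constructor
  · rintro ⟨t, ht, a, ha, rfl⟩
    refine ⟨t * c, mul_nonneg ht hc.le, c⁻¹ • a, hA _ (inv_pos.2 hc) a ha, ?_⟩
    match_scalars <;> field_simp
  · rintro ⟨t, ht, a, ha, rfl⟩
    refine ⟨t * c⁻¹, mul_nonneg ht (inv_pos.2 hc).le, c • a, hA c hc a ha, ?_⟩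
    match_scalars <;> field_simp

theorem dual_cone_duality_ii_to_i (T : Set (H × H)) (hTclosed : IsClosed T)
    (hTconv : Convex ℝ T) (hTcone : ∀ c : ℝ, 0 ≤ c → ∀ q ∈ T, c • q ∈ T)
    (hqriN : (qri (dualConePair T)).Nonempty)
    (hincl : qri (Prod.snd '' dualConePair T) ⊆ sqri (Prod.fst '' T)) :
    ∀ β₁ > (0:ℝ), (∀ h : H, ‖h‖ = 1 → h ∈ sqri (Prod.fst '' T) →
        ∃ z : H, (h, z) ∈ T ∧ β₁ ≤ (inner ℝ h z : ℝ)) →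
      ∀ q ∈ dualConePair T, ‖q.2‖ = 1 → (inner ℝ q.1 q.2 : ℝ) ≤ -β₁ := by
  intro β₁ hβ₁ hyp q hqN hq2
  obtain ⟨q₀, hq₀⟩ := hqriN
  have hNconv : Convex ℝ (dualConePair T) := by
    intro a ha b hb μ ν hμ hν hμν p hp
    have ha' := ha p hp
    have hb' := hb p hp
    simp only [Prod.smul_fst, Prod.smul_snd, Prod.fst_add, Prod.snd_add,
      inner_add_left, real_inner_smul_left]
    nlinarith
  set d : H × H := q₀ - q with hd
  set w : ℝ → H × H := fun l => q + l • d with hwdef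
  have hw_eq : ∀ l : ℝ, w l = l • q₀ + (1 - l) • q := by
    intro l; rw [hwdef]; simp only [hd]; module
  have hden : 0 < 1 + ‖d.2‖ := by positivity
  set lam0 : ℝ := min 1 (1 / (1 + ‖d.2‖)) with hlam0
  have hlam0pos : 0 < lam0 := lt_min one_pos (by positivity)
  have hconeA : ∀ c : ℝ, 0 < c → ∀ a ∈ Prod.fst '' T, c • a ∈ Prod.fst '' T := by
    rintro c hc _ ⟨p, hp, rfl⟩
    exact ⟨c • p, hTcone c hc.le p hp, rfl⟩
  have key : ∀ l ∈ Set.Ioo (0:ℝ) lam0,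
      (inner ℝ (w l).1 (w l).2 : ℝ) + β₁ * ‖(w l).2‖ ^ 2 ≤ 0 := by
    rintro l ⟨hl0, hl1⟩
    have hl_le1 : l ≤ 1 := le_of_lt (lt_of_lt_of_le hl1 (min_le_left _ _))
    have hwqri : w l ∈ qri (dualConePair T) := by
      rw [hw_eq]; exact qri_segment hNconv hq₀ hqN hl0 hl_le1
    have hw2 : (w l).2 = q.2 + l • d.2 := rfl
    have hnormpos : 0 < ‖(w l).2‖ := by
      have h1 : l * (1 + ‖d.2‖) < 1 := by
        have h2 := lt_of_lt_of_le hl1 (min_le_right _ _)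
        calc l * (1 + ‖d.2‖) < (1 / (1 + ‖d.2‖)) * (1 + ‖d.2‖) := by gcongr
          _ = 1 := by field_simp
      have htri : ‖q.2‖ ≤ ‖(w l).2‖ + ‖l • d.2‖ := by
        rw [hw2]
        calc ‖q.2‖ = ‖(q.2 + l • d.2) + (-(l • d.2))‖ := by simp
          _ ≤ ‖q.2 + l • d.2‖ + ‖-(l • d.2)‖ := norm_add_le _ _
          _ = ‖q.2 + l • d.2‖ + ‖l • d.2‖ := by rw [norm_neg]
      have hns : ‖l • d.2‖ = l * ‖d.2‖ := by
        rw [norm_smul, Real.norm_eq_abs, abs_of_pos hl0]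
      rw [hq2, hns] at htri
      nlinarith
    set v : H := (w l).2 with hv
    have hvsnd : v ∈ qri (Prod.snd '' dualConePair T) :=
      qri_image (ContinuousLinearMap.snd ℝ H H) hwqri
    have hvsqri : v ∈ sqri (Prod.fst '' T) := hincl hvsnd
    set h : H := ‖v‖⁻¹ • v with hhdef
    have hhsqri : h ∈ sqri (Prod.fst '' T) :=
      sqri_smul_cone hconeA hvsqri (inv_pos.2 hnormpos)
    have hhnorm : ‖h‖ = 1 := norm_smul_inv_norm (by
      intro h0; rw [h0, norm_zero] at hnormpos; exact lt_irrefl 0 hnormpos)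
    obtain ⟨z, hzT, hzin⟩ := hyp h hhnorm hhsqri
    have hvh : ‖v‖ • h = v := by
      rw [hhdef, smul_inv_smul₀ hnormpos.ne']
    have hmem : ‖v‖ • ((h, z) : H × H) ∈ T := hTcone ‖v‖ (norm_nonneg _) _ hzT
    have hpair := hwqri.1 _ hmem
    simp only [Prod.smul_fst, Prod.smul_snd] at hpair
    rw [hvh] at hpair
    have hir : (inner ℝ v (‖v‖ • z) : ℝ) = ‖v‖ * (inner ℝ v z : ℝ) := real_inner_smul_right _ _ _
    have hil : (inner ℝ h z : ℝ) = ‖v‖⁻¹ * (inner ℝ v z : ℝ) := by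
      rw [hhdef]; exact real_inner_smul_left _ _ _
    rw [hil] at hzin
    rw [hir] at hpair
    have hvzge : β₁ * ‖v‖ ≤ (inner ℝ v z : ℝ) := by
      have := mul_le_mul_of_nonneg_left hzin (norm_nonneg v)
      rw [← mul_assoc, mul_inv_cancel₀ hnormpos.ne', one_mul] at this
      nlinarith
    have hsq : ‖v‖ ^ 2 = ‖v‖ * ‖v‖ := sq ‖v‖
    nlinarith
  have hwcont : Continuous w := continuous_const.add (continuous_id.smul continuous_const)
  have hfc : Continuous fun l : ℝ => (inner ℝ (w l).1 (w l).2 : ℝ) + β₁ * ‖(w l).2‖ ^ 2 := by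
    have h1 : Continuous fun l : ℝ => (w l).1 := continuous_fst.comp hwcont
    have h2 : Continuous fun l : ℝ => (w l).2 := continuous_snd.comp hwcont
    exact (h1.inner h2).add (continuous_const.mul (h2.norm.pow 2))
  have hw0 : w 0 = q := by rw [hwdef]; simp
  have hlim : Tendsto (fun l : ℝ => (inner ℝ (w l).1 (w l).2 : ℝ) + β₁ * ‖(w l).2‖ ^ 2)
      (nhdsWithin 0 (Set.Ioi 0)) (nhds ((inner ℝ q.1 q.2 : ℝ) + β₁)) := by
    have := (hfc.tendsto 0).mono_left (nhdsWithin_le_nhds (s := Set.Ioi (0:ℝ)))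
    simpa [hw0, hq2] using this
  have hfinal : (inner ℝ q.1 q.2 : ℝ) + β₁ ≤ 0 := by
    refine le_of_tendsto hlim ?_
    filter_upwards [Ioo_mem_nhdsGT_of_mem ⟨le_refl 0, hlam0pos⟩] with l hl
    exact key l hl
  linarith
end
end

section
/- Let H be a real Hilbert space, f : H → ℝ ∪ {+∞} a proper lower semicontinuous function, x̄ ∈ dom f with 0 ∈ ∂_p f(x̄). Suppose qri(N_M(gph ∂_p f, (x̄, 0))) ≠ ∅ and qri(dom ∂²_M f(x̄, 0)) ⊆ −sqri(dom D²_M f(x̄, 0)), where dom ∂²_M f(x̄, 0) := {h : ∂²_M f(x̄, 0)(h) ≠ ∅} and dom D²_M f(x̄, 0) := {h : D²_M f(x̄, 0)(h) ≠ ∅}. If f satisfies the second-order optimality condition of the second kind at x̄, then f satisfies the second-order optimality condition of the third kind at x̄. -/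
open Filter Topology Set Pointwise

noncomputable section

variable {H : Type*} [NormedAddCommGroup H] [InnerProductSpace ℝ H] [CompleteSpace H]

section Aux

variable {H : Type*} [NormedAddCommGroup H] [InnerProductSpace ℝ H] [CompleteSpace H]

lemma D2M_smul_nonempty (f : H → EReal) (x₀ p v : H) {c : ℝ} (hc : 0 < c)
    (hne : (D2M f x₀ p v).Nonempty) : (D2M f x₀ p (c • v)).Nonempty := by
  obtain ⟨ζ, t, hn, zn, hpos, ht0, hhn, hzn, hmem⟩ := hne
  refine ⟨c • ζ, fun n => t n / c, fun n => c • hn n, fun n => c • zn n,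
    fun n => div_pos (hpos n) hc, ?_, ?_, ?_, ?_⟩
  · simpa using ht0.div_const c
  · exact hhn.const_smul c
  · intro w
    have := (hzn w).const_mul c
    simpa [real_inner_smul_left, mul_comm] using this
  · intro n
    have e : ∀ y : H, (t n / c) • (c • y) = t n • y := fun y => by
      rw [smul_smul, div_mul_cancel₀ _ hc.ne']
    rw [e, e]
    exact hmem n

lemma qri_combo {C : Set H} (hC : Convex ℝ C) {x₀ x : H} (hx₀ : x₀ ∈ qri C) (hx : x ∈ C)
    {μ : ℝ} (h0 : 0 ≤ μ) (h1 : μ < 1) : (1 - μ) • x₀ + μ • x ∈ qri C := by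
  obtain ⟨hx₀C, S, hS⟩ := hx₀
  have hwC : (1 - μ) • x₀ + μ • x ∈ C := hC hx₀C hx (by linarith) h0 (by ring)
  refine ⟨hwC, S, ?_⟩
  have hSclosed : IsClosed (S : Set H) := hS ▸ isClosed_closure
  have hmemS : ∀ c ∈ C, c - x₀ ∈ (S : Set H) := fun c hc =>
    hS ▸ subset_closure ⟨1, zero_le_one, c, hc, (one_smul ℝ _).symm⟩
  apply subset_antisymm
  · apply closure_minimal _ hSclosed
    rintro y ⟨t, ht, c, hc, rfl⟩
    have h1' : c - x₀ ∈ S := hmemS c hc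
    have h2' : x - x₀ ∈ S := hmemS x hx
    have key : c - ((1 - μ) • x₀ + μ • x) = (c - x₀) - μ • (x - x₀) := by module
    have : t • (c - ((1 - μ) • x₀ + μ • x)) ∈ S := by
      rw [key]; exact S.smul_mem t (S.sub_mem h1' (S.smul_mem μ h2'))
    exact this
  · rw [← hS]
    apply closure_mono
    rintro y ⟨t, ht, c, hc, rfl⟩
    have h1μ : (0:ℝ) < 1 - μ := by linarith
    refine ⟨t / (1 - μ), div_nonneg ht h1μ.le, (1 - μ) • c + μ • x,
      hC hc hx h1μ.le h0 (by ring), ?_⟩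
    have key : ((1 - μ) • c + μ • x) - ((1 - μ) • x₀ + μ • x) = (1 - μ) • (c - x₀) := by module
    rw [key, smul_smul, div_mul_cancel₀ _ h1μ.ne']

lemma qri_negsnd {A : Set (H × H)} {q : H × H} (hq : q ∈ qri A) :
    -q.2 ∈ qri {h : H | ∃ z : H, (z, -h) ∈ A} := by
  obtain ⟨hqA, S, hS⟩ := hq
  refine ⟨⟨q.1, by simpa using hqA⟩, ?_⟩
  set T : H × H →L[ℝ] H := -(ContinuousLinearMap.snd ℝ H H) with hT
  have hTval : ∀ p : H × H, T p = -p.2 := fun p => rfl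
  have hcone : coneGen {h : H | ∃ z : H, (z, -h) ∈ A} (-q.2) = T '' coneGen A q := by
    ext y
    constructor
    · rintro ⟨t, ht, a, ⟨z, hz⟩, rfl⟩
      refine ⟨t • ((z, -a) - q), ⟨t, ht, (z, -a), hz, rfl⟩, ?_⟩
      rw [map_smul, map_sub, hTval, hTval]
      simp
    · rintro ⟨p', ⟨t, ht, a, ha, rfl⟩, rfl⟩
      refine ⟨t, ht, -a.2, ⟨a.1, by simpa using ha⟩, ?_⟩
      rw [map_smul, map_sub, hTval, hTval]
  have hclos : closure (T '' coneGen A q) = closure (T '' (S : Set (H × H))) := by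
    apply subset_antisymm
    · apply closure_mono
      apply Set.image_mono
      exact hS ▸ subset_closure
    · rw [← hS]
      exact closure_minimal
        ((image_closure_subset_closure_image T.continuous)) isClosed_closure
  refine ⟨(Submodule.map (T : H × H →ₗ[ℝ] H) S).topologicalClosure, ?_⟩
  rw [hcone, hclos, Submodule.topologicalClosure_coe]
  congr 1

end Aux

theorem soc2_implies_soc3 (f : H → EReal) (hlsc : LowerSemicontinuous f) (hbot : ∀ x, f x ≠ ⊥)
    (hproper : ∃ x, f x ≠ ⊤) (x₀ : H) (hdom : f x₀ ≠ ⊤) (hp0 : (0:H) ∈ proxSubdiff f x₀)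
    (hqri : (qri (NM f x₀ 0)).Nonempty)
    (hincl : qri {h : H | (partial2M f x₀ 0 h).Nonempty} ⊆
      -(sqri {h : H | (D2M f x₀ 0 h).Nonempty})) :
    SOC2 f x₀ → SOC3 f x₀ := by
  intro hsoc2
  obtain ⟨β, hβ, hβ2⟩ := hsoc2
  refine ⟨β, hβ, ?_⟩
  intro h hh z hz
  obtain ⟨q₀, hq₀⟩ := hqri
  set P : Set H := {h : H | (partial2M f x₀ 0 h).Nonempty} with hPdef
  have hPeq : P = {h : H | ∃ z : H, (z, -h) ∈ NM f x₀ 0} := rfl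
  set h₀ : H := -q₀.2 with hh₀def
  set z₀ : H := q₀.1 with hz₀def
  have hh₀ : h₀ ∈ qri P := by rw [hPeq]; exact qri_negsnd hq₀
  have hq₀mem : q₀ ∈ NM f x₀ 0 := hq₀.1
  have hz₀ : (z₀, -h₀) ∈ NM f x₀ 0 := by
    simp only [hh₀def, hz₀def, neg_neg]; exact hq₀mem
  have hhP : h ∈ P := ⟨z, hz⟩
  have hPconv : Convex ℝ P := by
    intro a ha b hb s t hs ht hst
    obtain ⟨za, hza⟩ := ha
    obtain ⟨zb, hzb⟩ := hb
    refine ⟨s • za + t • zb, ?_⟩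
    intro w hw
    have h1 := hza w hw
    have h2 := hzb w hw
    simp only [inner_add_left, inner_neg_left, real_inner_smul_left] at h1 h2 ⊢
    nlinarith [mul_le_mul_of_nonneg_left h1 hs, mul_le_mul_of_nonneg_left h2 ht]
  have key : ∀ μ ∈ Set.Ioo (0:ℝ) 1,
      0 ≤ μ * (inner ℝ z ((1-μ) • h₀ + μ • h) : ℝ)
        + (1-μ) * ‖z₀‖ * ‖(1-μ) • h₀ + μ • h‖ - β * ‖(1-μ) • h₀ + μ • h‖ ^ 2 := by
    rintro μ ⟨hμ0, hμ1⟩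
    set w : H := (1-μ) • h₀ + μ • h with hwdef
    by_cases hw0 : w = 0
    · rw [hw0]; simp
    · have hr : 0 < ‖w‖ := norm_pos_iff.mpr hw0
      have hwq : w ∈ qri P := qri_combo hPconv hh₀ hhP hμ0.le hμ1
      have hw' := hincl hwq
      rw [Set.mem_neg] at hw'
      obtain ⟨hwD, -⟩ := hw'
      have huD : (D2M f x₀ 0 (‖w‖⁻¹ • (-w))).Nonempty :=
        D2M_smul_nonempty f x₀ 0 (-w) (inv_pos.mpr hr) hwD
      set u : H := ‖w‖⁻¹ • (-w) with hudef
      have hu1 : ‖u‖ = 1 := by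
        rw [hudef, norm_smul, norm_neg, norm_inv, norm_norm, inv_mul_cancel₀ hr.ne']
      obtain ⟨zu, hzuD, hzu⟩ := hβ2 u hu1 huD
      have hru : ‖w‖ • u = -w := by
        rw [hudef, smul_smul, mul_inv_cancel₀ hr.ne', one_smul]
      have pair1 : (inner ℝ z u : ℝ) + (inner ℝ (-h) zu : ℝ) ≤ 0 := hz (u, zu) hzuD
      have pair2 : (inner ℝ z₀ u : ℝ) + (inner ℝ (-h₀) zu : ℝ) ≤ 0 := hz₀ (u, zu) hzuD
      have cs : -‖z₀‖ ≤ (inner ℝ z₀ u : ℝ) := by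
        have h1 := abs_real_inner_le_norm z₀ u
        rw [hu1, mul_one] at h1
        linarith [neg_abs_le (inner ℝ z₀ u : ℝ)]
      have hXt : ‖w‖ * (inner ℝ z u : ℝ) = -(inner ℝ z w : ℝ) := by
        rw [← real_inner_smul_right, hru, inner_neg_right]
      have hrs : ‖w‖ * (inner ℝ zu u : ℝ) = -(inner ℝ w zu : ℝ) := by
        have h0 : (inner ℝ zu u : ℝ) = (inner ℝ u zu : ℝ) := real_inner_comm u zu
        rw [h0, ← real_inner_smul_left, hru, inner_neg_left]
      have hwzu : (inner ℝ w zu : ℝ) = (1-μ) * (inner ℝ h₀ zu : ℝ) + μ * (inner ℝ h zu : ℝ) := by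
        rw [hwdef]; simp [inner_add_left, real_inner_smul_left]
      have hA : (inner ℝ z u : ℝ) ≤ (inner ℝ h zu : ℝ) := by
        rw [inner_neg_left] at pair1; linarith
      have hB : -‖z₀‖ ≤ (inner ℝ h₀ zu : ℝ) := by
        rw [inner_neg_left] at pair2; linarith
      have hwb : (inner ℝ w zu : ℝ) ≤ -(‖w‖ * β) := by
        have h1 : ‖w‖ * β ≤ ‖w‖ * (inner ℝ zu u : ℝ) := mul_le_mul_of_nonneg_left hzu hr.le
        linarith [hrs]
      have hchain : μ * (inner ℝ z u : ℝ) ≤ -(‖w‖ * β) + (1-μ) * ‖z₀‖ := by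
        have h1 : μ * (inner ℝ z u : ℝ) ≤ μ * (inner ℝ h zu : ℝ) :=
          mul_le_mul_of_nonneg_left hA hμ0.le
        have h2 : (1-μ) * (-‖z₀‖) ≤ (1-μ) * (inner ℝ h₀ zu : ℝ) :=
          mul_le_mul_of_nonneg_left hB (by linarith)
        nlinarith [hwzu, hwb]
      have hmul := mul_le_mul_of_nonneg_left hchain hr.le
      have hXX : ‖w‖ * (μ * (inner ℝ z u : ℝ)) = -(μ * (inner ℝ z w : ℝ)) := by
        rw [mul_left_comm, hXt]; ring
      nlinarith [hmul, hXX]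
  have hc : Continuous (fun μ : ℝ => ((1-μ) • h₀ + μ • h : H)) :=
    ((continuous_const.sub continuous_id).smul continuous_const).add
      (continuous_id.smul continuous_const)
  have hcont : Continuous (fun μ : ℝ => μ * (inner ℝ z ((1-μ) • h₀ + μ • h) : ℝ)
      + (1-μ) * ‖z₀‖ * ‖(1-μ) • h₀ + μ • h‖ - β * ‖(1-μ) • h₀ + μ • h‖ ^ 2) :=
    ((continuous_id.mul (continuous_const.inner hc)).add
      (((continuous_const.sub continuous_id).mul continuous_const).mul hc.norm)).sub
      (continuous_const.mul (hc.norm.pow 2))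
  have hsub : Set.Ioo (0:ℝ) 1 ⊆ {μ : ℝ | 0 ≤ μ * (inner ℝ z ((1-μ) • h₀ + μ • h) : ℝ)
      + (1-μ) * ‖z₀‖ * ‖(1-μ) • h₀ + μ • h‖ - β * ‖(1-μ) • h₀ + μ • h‖ ^ 2} :=
    fun μ hμ => key μ hμ
  have hclosed : IsClosed {μ : ℝ | 0 ≤ μ * (inner ℝ z ((1-μ) • h₀ + μ • h) : ℝ)
      + (1-μ) * ‖z₀‖ * ‖(1-μ) • h₀ + μ • h‖ - β * ‖(1-μ) • h₀ + μ • h‖ ^ 2} :=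
    isClosed_le continuous_const hcont
  have hicc : Set.Icc (0:ℝ) 1 ⊆ {μ : ℝ | 0 ≤ μ * (inner ℝ z ((1-μ) • h₀ + μ • h) : ℝ)
      + (1-μ) * ‖z₀‖ * ‖(1-μ) • h₀ + μ • h‖ - β * ‖(1-μ) • h₀ + μ • h‖ ^ 2} := by
    rw [← closure_Ioo (by norm_num : (0:ℝ) ≠ 1)]
    exact closure_minimal hsub hclosed
  have hend := hicc (Set.mem_Icc.mpr ⟨zero_le_one, le_refl (1:ℝ)⟩)
  simp only [Set.mem_setOf_eq, sub_self, zero_smul, zero_add, one_smul, zero_mul, one_mul,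
    zero_mul, mul_zero, add_zero] at hend
  rw [hh] at hend
  linarith [hend]
end
end

section
/- Let H be a real Hilbert space, f : H → ℝ ∪ {+∞} a proper lower semicontinuous function and x̄ ∈ dom f. Then the following are equivalent: (i) x̄ is a strict local minimizer of order two for f; (ii) 0 ∈ ∂_p f(x̄) and there exists β > 0 such that f''₋(x̄, 0, h) ≥ β holds uniformly with respect to h in the unit sphere S_H; (iii) liminf_{t↓0} ( inf_{h ∈ S_H} 2(f(x̄ + th) − f(x̄))/t² ) > 0. -/
open Filter Topology Set Pointwise

noncomputable section

variable {H : Type*} [NormedAddCommGroup H] [InnerProductSpace ℝ H] [CompleteSpace H]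

lemma key1_s16 (r c t : ℝ) (ht : 0 < t) (b : EReal)
    (h : (c:EReal) ≤ ((2/t^2:ℝ):EReal) * (b - (r:EReal))) :
    (r:EReal) + ((c/2 * t^2 :ℝ):EReal) ≤ b := by
  have ht2 : (0:ℝ) < 2/t^2 := by positivity
  induction b using EReal.rec with
  | bot =>
    rw [EReal.bot_sub, EReal.coe_mul_bot_of_pos ht2] at h
    exact absurd (le_bot_iff.1 h) (EReal.coe_ne_bot c)
  | coe s =>
    rw [← EReal.coe_sub, ← EReal.coe_mul, EReal.coe_le_coe_iff] at h
    rw [← EReal.coe_add, EReal.coe_le_coe_iff]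
    have ht' : t^2 > 0 := by positivity
    rw [div_mul_eq_mul_div, le_div_iff₀ ht'] at h
    nlinarith
  | top => exact le_top

lemma key2 (r c t : ℝ) (ht : 0 < t) (b : EReal)
    (h : (r:EReal) + ((c/2 * t^2:ℝ):EReal) ≤ b) :
    (c:EReal) ≤ ((2/t^2:ℝ):EReal) * (b - (r:EReal)) := by
  have ht2 : (0:ℝ) < 2/t^2 := by positivity
  induction b using EReal.rec with
  | bot =>
    rw [← EReal.coe_add] at h
    exact absurd (le_bot_iff.1 h) (EReal.coe_ne_bot _)
  | coe s =>
    rw [← EReal.coe_add, EReal.coe_le_coe_iff] at h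
    rw [← EReal.coe_sub, ← EReal.coe_mul, EReal.coe_le_coe_iff]
    have ht' : t^2 > 0 := by positivity
    rw [div_mul_eq_mul_div, le_div_iff₀ ht']
    nlinarith
  | top =>
    rw [EReal.top_sub_coe, EReal.coe_mul_top_of_pos ht2]
    exact le_top

lemma Delta2_zero (f : H → EReal) (x₀ : H) (t : ℝ) (u : H) :
    Delta2 f x₀ 0 t u = ((2/t^2:ℝ):EReal) * (f (x₀ + t • u) - f x₀) := by
  simp [Delta2, inner_zero_left]
theorem strict_local_min_order_two_characterization (f : H → EReal) (hlsc : LowerSemicontinuous f) (hbot : ∀ x, f x ≠ ⊥)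
    (hproper : ∃ x, f x ≠ ⊤) (x₀ : H) (hdom : f x₀ ≠ ⊤) :
    (StrictLocalMinOrder2 f x₀ ↔
      ((0:H) ∈ proxSubdiff f x₀ ∧
        ∃ β > (0:ℝ), UniformDiniGE f x₀ 0 β (Metric.sphere (0:H) 1))) ∧
    (StrictLocalMinOrder2 f x₀ ↔
      0 < Filter.liminf (fun t : ℝ =>
        sInf ((fun h : H => ((2 / t ^ 2 : ℝ) : EReal) * (f (x₀ + t • h) - f x₀)) ''
          Metric.sphere (0:H) 1)) (nhdsWithin (0:ℝ) (Set.Ioi 0))) := by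
  have hr₀ : (((f x₀).toReal : ℝ) : EReal) = f x₀ := EReal.coe_toReal hdom (hbot x₀)
  set r₀ : ℝ := (f x₀).toReal
  -- (i) → (ii)
  have main1 : StrictLocalMinOrder2 f x₀ →
      ((0:H) ∈ proxSubdiff f x₀ ∧
        ∃ β > (0:ℝ), UniformDiniGE f x₀ 0 β (Metric.sphere (0:H) 1)) := by
    rintro ⟨β, hβ, δ, hδ, hmin⟩
    constructor
    · refine ⟨β, hβ, δ, hδ, fun y hy => ?_⟩
      refine le_trans ?_ (hmin y hy)
      refine add_le_add le_rfl ?_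
      rw [EReal.coe_le_coe_iff]
      have h0 : (inner ℝ (0:H) (y - x₀) : ℝ) = 0 := inner_zero_left _
      rw [h0]
      nlinarith [sq_nonneg ‖y - x₀‖]
    · refine ⟨β, hβ, fun ε hε => ?_⟩
      set δ' := min (min (1/2 : ℝ) (ε / (2 * β))) (δ / 2) with hδ'def
      have hδ'pos : 0 < δ' := lt_min (lt_min one_half_pos (by positivity)) (half_pos hδ)
      have hδ'le1 : δ' ≤ 1/2 := le_trans (min_le_left _ _) (min_le_left _ _)
      have hδ'leε : δ' ≤ ε / (2 * β) := le_trans (min_le_left _ _) (min_le_right _ _)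
      have hδ'leδ : δ' ≤ δ / 2 := min_le_right _ _
      refine ⟨δ', hδ'pos, fun t ht htδ' h hh => ?_⟩
      obtain ⟨a, ha, b, hb, rfl⟩ := hh
      have ha' : ‖a‖ = 1 := mem_sphere_zero_iff_norm.1 ha
      have hb' : ‖b‖ ≤ δ' := mem_closedBall_zero_iff.1 hb
      have hhub : ‖a + b‖ ≤ 1 + δ' := by
        calc ‖a + b‖ ≤ ‖a‖ + ‖b‖ := norm_add_le _ _
          _ ≤ 1 + δ' := by rw [ha']; linarith
      have hhlb : 1 - δ' ≤ ‖a + b‖ := by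
        have := norm_sub_norm_le a (-b)
        simp only [sub_neg_eq_add, norm_neg] at this
        linarith [abs_le.1 (abs_norm_sub_norm_le (a + b) a)]
      have hx : x₀ + t • (a + b) ∈ Metric.ball x₀ δ := by
        rw [Metric.mem_ball, dist_eq_norm, add_sub_cancel_left, norm_smul,
          Real.norm_of_nonneg ht.le]
        nlinarith [mul_le_mul_of_nonneg_left hhub ht.le,
          mul_lt_mul_of_pos_right htδ' (show (0:ℝ) < 1 + δ' by linarith)]
      rw [Delta2_zero, ← hr₀]
      apply key2 r₀ (β - ε) t ht
      refine le_trans ?_ (hmin _ hx)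
      rw [hr₀]
      refine add_le_add le_rfl ?_
      rw [EReal.coe_le_coe_iff, add_sub_cancel_left, norm_smul, Real.norm_of_nonneg ht.le]
      have h1 : β - ε ≤ β * ‖a + b‖ ^ 2 := by
        have hge : (1 - δ')^2 ≤ ‖a + b‖^2 := by
          apply pow_le_pow_left₀ (by linarith) hhlb
        have h2 : 2 * β * δ' ≤ ε := by
          rw [le_div_iff₀ (by positivity : (0:ℝ) < 2 * β)] at hδ'leε
          linarith
        nlinarith [mul_le_mul_of_nonneg_left hge hβ.le, sq_nonneg δ',
          mul_pos hβ hδ'pos]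
      nlinarith [mul_nonneg (sq_nonneg t) (sub_nonneg.2 h1)]
  -- (ii) → (i)
  have main2 : (∃ β > (0:ℝ), UniformDiniGE f x₀ 0 β (Metric.sphere (0:H) 1)) →
      StrictLocalMinOrder2 f x₀ := by
    rintro ⟨β, hβ, hU⟩
    obtain ⟨δ, hδ, hD⟩ := hU (β/2) (by positivity)
    refine ⟨β/2, by positivity, δ, hδ, fun x hx => ?_⟩
    by_cases hxe : x = x₀
    · subst hxe; simp
    · set t := ‖x - x₀‖ with htdef
      have ht : 0 < t := norm_pos_iff.2 (sub_ne_zero.2 hxe)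
      set h : H := t⁻¹ • (x - x₀) with hhdef
      have hhs : h ∈ Metric.sphere (0:H) 1 := by
        rw [mem_sphere_zero_iff_norm, hhdef, norm_smul, norm_inv, Real.norm_of_nonneg ht.le,
          ← htdef, inv_mul_cancel₀ ht.ne']
      have hmem : h ∈ Metric.sphere (0:H) 1 + Metric.closedBall (0:H) δ := by
        have := Set.add_mem_add hhs (Metric.mem_closedBall_self (x := (0:H)) hδ.le)
        rwa [add_zero] at this
      have htδ : t < δ := by rwa [Metric.mem_ball, dist_eq_norm] at hx
      have hkey := hD t ht htδ h hmem
      rw [Delta2_zero, ← hr₀] at hkey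
      have hxeq : x₀ + t • h = x := by
        rw [hhdef, smul_inv_smul₀ ht.ne', add_sub_cancel]
      rw [hxeq] at hkey
      have hfin := key1_s16 r₀ (β - β/2) t ht (f x) hkey
      have heq : β/2/2 * ‖x - x₀‖^2 = (β - β/2)/2 * t^2 := by rw [← htdef]; ring
      rw [← hr₀, heq]
      exact hfin
  -- (i) → (iii)
  have main3 : StrictLocalMinOrder2 f x₀ →
      0 < Filter.liminf (fun t : ℝ =>
        sInf ((fun h : H => ((2 / t ^ 2 : ℝ) : EReal) * (f (x₀ + t • h) - f x₀)) ''
          Metric.sphere (0:H) 1)) (nhdsWithin (0:ℝ) (Set.Ioi 0)) := by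
    rintro ⟨β, hβ, δ, hδ, hmin⟩
    have hev : ∀ᶠ t in nhdsWithin (0:ℝ) (Set.Ioi 0), (β:EReal) ≤
        sInf ((fun h : H => ((2 / t ^ 2 : ℝ) : EReal) * (f (x₀ + t • h) - f x₀)) ''
          Metric.sphere (0:H) 1) := by
      filter_upwards [Ioo_mem_nhdsGT_of_mem (⟨le_refl 0, hδ⟩ : (0:ℝ) ∈ Set.Ico 0 δ)]
        with t ht
      apply le_sInf
      rintro b ⟨h, hh, rfl⟩
      have hh' : ‖h‖ = 1 := mem_sphere_zero_iff_norm.1 hh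
      rw [← hr₀]
      apply key2 r₀ β t ht.1
      have hx : x₀ + t • h ∈ Metric.ball x₀ δ := by
        rw [Metric.mem_ball, dist_eq_norm, add_sub_cancel_left, norm_smul,
          Real.norm_of_nonneg ht.1.le, hh', mul_one]
        exact ht.2
      refine le_trans (le_of_eq ?_) (hmin _ hx)
      rw [hr₀]
      congr 1
      rw [EReal.coe_eq_coe_iff, add_sub_cancel_left, norm_smul,
        Real.norm_of_nonneg ht.1.le, hh', mul_one]
    calc (0:EReal) < (β:EReal) := by exact_mod_cast hβ
      _ ≤ _ := le_liminf_of_le (by isBoundedDefault) hev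
  -- (iii) → (i)
  have main4 : 0 < Filter.liminf (fun t : ℝ =>
        sInf ((fun h : H => ((2 / t ^ 2 : ℝ) : EReal) * (f (x₀ + t • h) - f x₀)) ''
          Metric.sphere (0:H) 1)) (nhdsWithin (0:ℝ) (Set.Ioi 0)) →
      StrictLocalMinOrder2 f x₀ := by
    intro hlim
    obtain ⟨r, hr0, hrlim⟩ := EReal.lt_iff_exists_real_btwn.1 hlim
    have hr : (0:ℝ) < r := by exact_mod_cast hr0
    have hev := Filter.eventually_lt_of_lt_liminf hrlim
    obtain ⟨δ, hδ, hIoo⟩ := mem_nhdsGT_iff_exists_Ioo_subset.1 hev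
    refine ⟨r, hr, δ, hδ, fun x hx => ?_⟩
    by_cases hxe : x = x₀
    · subst hxe; simp
    · set t := ‖x - x₀‖ with htdef
      have ht : 0 < t := norm_pos_iff.2 (sub_ne_zero.2 hxe)
      set h : H := t⁻¹ • (x - x₀) with hhdef
      have hhs : h ∈ Metric.sphere (0:H) 1 := by
        rw [mem_sphere_zero_iff_norm, hhdef, norm_smul, norm_inv, Real.norm_of_nonneg ht.le,
          ← htdef, inv_mul_cancel₀ ht.ne']
      have htδ : t < δ := by rwa [Metric.mem_ball, dist_eq_norm] at hx
      have hIn := hIoo (⟨ht, htδ⟩ : t ∈ Set.Ioo 0 δ)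
      have h2 : sInf ((fun h : H => ((2 / t ^ 2 : ℝ) : EReal) * (f (x₀ + t • h) - f x₀)) ''
          Metric.sphere (0:H) 1) ≤ ((2 / t ^ 2 : ℝ) : EReal) * (f (x₀ + t • h) - f x₀) :=
        sInf_le ⟨h, hhs, rfl⟩
      have hxeq : x₀ + t • h = x := by
        rw [hhdef, smul_inv_smul₀ ht.ne', add_sub_cancel]
      rw [hxeq] at h2
      have hkey : (r:EReal) ≤ ((2 / t ^ 2 : ℝ) : EReal) * (f x - (r₀ : EReal)) := by
        rw [hr₀]
        exact le_trans (le_of_lt hIn) h2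
      have hfin := key1_s16 r₀ r t ht (f x) hkey
      have heq : r/2 * ‖x - x₀‖^2 = r/2 * t^2 := by rw [← htdef]
      rw [← hr₀, heq]
      exact hfin
  exact ⟨⟨fun h => main1 h, fun h => main2 h.2⟩, ⟨main3, main4⟩⟩
end
end
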